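/- arXiv:2005.06309 — 13 statements merged into one kernel-verified Lean document; each statement's English description precedes it below -/
import Mathlib

section
/- Let μ be a Borel probability measure on ℝ and κ > 0. Let T_κ : ℝ → ℝ be the cutoff function T_κ(t) = max(-κ, min(t, κ)). Then there exists a ∈ ℝ such that ∫ T_κ(t - a)² dμ(t) ≤ 8 ∫∫ T_κ(t - s)² dμ(t) dμ(s). -/
open MeasureTheory

theorem stmt_0 (μ : Measure ℝ) [IsProbabilityMeasure μ] (κ : ℝ) (hκ : 0 < κ) :
    ∃ a : ℝ, ∫ t, (max (-κ) (min (t - a) κ)) ^ 2 ∂μ ≤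
      8 * ∫ s, ∫ t, (max (-κ) (min (t - s) κ)) ^ 2 ∂μ ∂μ := by
  set F : ℝ → ℝ := fun s => ∫ t, (max (-κ) (min (t - s) κ)) ^ 2 ∂μ with hF
  have hbd : ∀ s t : ℝ, |(max (-κ) (min (t - s) κ)) ^ 2| ≤ κ ^ 2 := by
    intro s t
    rw [abs_of_nonneg (sq_nonneg _)]
    refine sq_le_sq' (le_max_of_le_left le_rfl) (max_le (by linarith) (min_le_right _ _))
  have hcont : Continuous fun p : ℝ × ℝ => (max (-κ) (min (p.2 - p.1) κ)) ^ 2 := by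
    fun_prop
  have hmeas : StronglyMeasurable F := by
    exact (hcont.stronglyMeasurable).integral_prod_right'
  have hFbd : ∀ s, |F s| ≤ κ ^ 2 := by
    intro s
    calc |F s| = ‖F s‖ := rfl
    _ ≤ κ ^ 2 * (μ Set.univ).toReal := by
        refine norm_integral_le_of_norm_le_const ?_
        filter_upwards with t
        rw [Real.norm_eq_abs]; exact hbd s t
    _ = κ ^ 2 := by simp
  have hint : Integrable F μ := by
    refine Integrable.mono' (integrable_const (κ ^ 2)) hmeas.aestronglyMeasurable ?_
    filter_upwards with s using hFbd s
  obtain ⟨a, ha⟩ := exists_le_integral hint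
  refine ⟨a, ha.trans ?_⟩
  have h0 : 0 ≤ ∫ s, F s ∂μ := by
    refine integral_nonneg fun s => integral_nonneg fun t => sq_nonneg _
  linarith
end

section
/- Let (a_n) and (b_n) be bounded sequences of nonnegative reals such that b_n = o(a_n) as n → ∞ and ∑ a_n = +∞. Then there exists a subset I ⊆ ℕ such that ∑_{i ∈ I} b_i < +∞ and ∑_{i ∈ I} a_i = +∞. -/
open Finset

theorem stmt_1 (a b : ℕ → ℝ) (ha : ∀ n, 0 ≤ a n) (hb : ∀ n, 0 ≤ b n)
    (M : ℝ) (haM : ∀ n, a n ≤ M) (hbM : ∀ n, b n ≤ M)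
    (hsmall : ∀ ε > 0, ∃ N : ℕ, ∀ n ≥ N, b n ≤ ε * a n)
    (hdiv : ¬ Summable a) :
    ∃ I : Set ℕ, Summable (I.indicator b) ∧ ¬ Summable (I.indicator a) := by
  classical
  have hM0 : 0 ≤ M := le_trans (ha 0) (haM 0)
  choose N hNspec using fun k : ℕ => hsmall ((1/2 : ℝ)^k) (by positivity)
  have hdt : Filter.Tendsto (fun n => ∑ i ∈ range n, a i) Filter.atTop Filter.atTop :=
    (not_summable_iff_tendsto_nat_atTop_of_nonneg ha).1 hdiv
  have hex : ∀ s : ℕ, ∃ m, 1 ≤ ∑ i ∈ Finset.Ico s m, a i := by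
    intro s
    obtain ⟨m, hm⟩ := (hdt.eventually_ge_atTop (∑ i ∈ range s, a i + 1)).exists
    have hsm : s ≤ m := by
      by_contra h
      push_neg at h
      have : ∑ i ∈ range m, a i ≤ ∑ i ∈ range s, a i :=
        Finset.sum_le_sum_of_subset_of_nonneg (Finset.range_subset_range.2 h.le)
          (fun i _ _ => ha i)
      linarith
    refine ⟨m, ?_⟩
    rw [Finset.sum_Ico_eq_sub _ hsm]
    linarith
  set start : ℕ → ℕ :=
    fun k => Nat.rec (N 0) (fun k ih => max (N (k+1)) (Nat.find (hex ih))) k with hstart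
  set en : ℕ → ℕ := fun k => Nat.find (hex (start k)) with hen
  have hstart0 : start 0 = N 0 := rfl
  have hstartsucc : ∀ k, start (k+1) = max (N (k+1)) (en k) := fun k => rfl
  have hNle : ∀ k, N k ≤ start k := by
    intro k
    cases k with
    | zero => exact hstart0.ge
    | succ k => rw [hstartsucc]; exact le_max_left _ _
  have h1 : ∀ k, 1 ≤ ∑ i ∈ Finset.Ico (start k) (en k), a i :=
    fun k => Nat.find_spec (hex (start k))
  have hlt : ∀ k, start k < en k := by
    intro k
    by_contra h
    push_neg at h
    have h2 := h1 k
    rw [Finset.Ico_eq_empty (by omega)] at h2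
    simp at h2
    linarith
  have hchain : ∀ k, en k ≤ start (k+1) := fun k => by
    rw [hstartsucc]; exact le_max_right _ _
  have hub : ∀ k, ∑ i ∈ Finset.Ico (start k) (en k), a i ≤ 1 + M := by
    intro k
    have hk := hlt k
    have hmin : ¬ (1 ≤ ∑ i ∈ Finset.Ico (start k) (en k - 1), a i) :=
      Nat.find_min (hex (start k)) (show en k - 1 < en k by omega)
    push_neg at hmin
    have he : en k = (en k - 1) + 1 := by omega
    rw [he, Finset.sum_Ico_succ_top (by omega : start k ≤ en k - 1)]
    have := haM (en k - 1)
    linarith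
  have hblockb : ∀ k, ∑ i ∈ Finset.Ico (start k) (en k), b i ≤ (1/2 : ℝ)^k * (1 + M) := by
    intro k
    calc ∑ i ∈ Finset.Ico (start k) (en k), b i
        ≤ ∑ i ∈ Finset.Ico (start k) (en k), (1/2 : ℝ)^k * a i :=
          Finset.sum_le_sum (fun i hi =>
            hNspec k i (le_trans (hNle k) (Finset.mem_Ico.1 hi).1))
      _ = (1/2 : ℝ)^k * ∑ i ∈ Finset.Ico (start k) (en k), a i := by
          rw [Finset.mul_sum]
      _ ≤ (1/2 : ℝ)^k * (1 + M) :=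
          mul_le_mul_of_nonneg_left (hub k) (by positivity)
  have hsm : StrictMono start :=
    strictMono_nat_of_lt_succ (fun k => lt_of_lt_of_le (hlt k) (hchain k))
  have hkle : ∀ k, k ≤ start k := fun k => hsm.le_apply
  have hord : ∀ k l, k < l → en k ≤ start l := by
    intro k l hkl
    induction l with
    | zero => omega
    | succ l ih =>
      rcases Nat.lt_succ_iff_lt_or_eq.1 hkl with h | h
      · exact le_trans (ih h) (le_trans (hlt l).le (hchain l))
      · subst h; exact hchain k
  have hdisj : ∀ k l, k ≠ l →
      Disjoint (Finset.Ico (start k) (en k)) (Finset.Ico (start l) (en l)) := by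
    intro k l hkl
    rw [Finset.disjoint_left]
    intro i hi1 hi2
    rw [Finset.mem_Ico] at hi1 hi2
    rcases hkl.lt_or_gt with h | h
    · have := hord k l h; omega
    · have := hord l k h; omega
  refine ⟨⋃ k, Set.Ico (start k) (en k), ?_, ?_⟩
  · -- Summable (I.indicator b)
    apply summable_of_sum_range_le (c := 2 * (1 + M))
      (fun n => Set.indicator_nonneg (fun i _ => hb i) n)
    intro n
    have hsplit : ∑ i ∈ range n, Set.indicator (⋃ k, Set.Ico (start k) (en k)) b i
        = ∑ i ∈ (range n).filter (fun i => i ∈ ⋃ k, Set.Ico (start k) (en k)), b i := by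
      rw [Finset.sum_filter]
      refine Finset.sum_congr rfl (fun i _ => ?_)
      by_cases h : i ∈ ⋃ k, Set.Ico (start k) (en k) <;> simp [Set.indicator, h]
    have hsub : (range n).filter (fun i => i ∈ ⋃ k, Set.Ico (start k) (en k))
        ⊆ (range n).biUnion (fun k => Finset.Ico (start k) (en k)) := by
      intro i hi
      rw [Finset.mem_filter, Finset.mem_range] at hi
      obtain ⟨hin, hmem⟩ := hi
      obtain ⟨k, hk⟩ := Set.mem_iUnion.1 hmem
      rw [Set.mem_Ico] at hk
      refine Finset.mem_biUnion.2 ⟨k, Finset.mem_range.2 ?_, Finset.mem_Ico.2 hk⟩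
      have := hkle k
      omega
    calc ∑ i ∈ range n, Set.indicator (⋃ k, Set.Ico (start k) (en k)) b i
        = ∑ i ∈ (range n).filter (fun i => i ∈ ⋃ k, Set.Ico (start k) (en k)), b i := hsplit
      _ ≤ ∑ i ∈ (range n).biUnion (fun k => Finset.Ico (start k) (en k)), b i :=
          Finset.sum_le_sum_of_subset_of_nonneg hsub (fun i _ _ => hb i)
      _ = ∑ k ∈ range n, ∑ i ∈ Finset.Ico (start k) (en k), b i :=
          Finset.sum_biUnion (fun k _ l _ hkl => hdisj k l hkl)
      _ ≤ ∑ k ∈ range n, (1/2 : ℝ)^k * (1 + M) :=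
          Finset.sum_le_sum (fun k _ => hblockb k)
      _ = (∑ k ∈ range n, (1/2 : ℝ)^k) * (1 + M) := by rw [Finset.sum_mul]
      _ ≤ 2 * (1 + M) :=
          mul_le_mul_of_nonneg_right (sum_geometric_two_le n) (by linarith)
  · -- ¬ Summable (I.indicator a)
    intro hsum
    have hbd : ∀ K : ℕ, (K : ℝ) ≤ ∑' i, Set.indicator (⋃ k, Set.Ico (start k) (en k)) a i := by
      intro K
      have hfin := Summable.sum_le_tsum ((range K).biUnion (fun k => Finset.Ico (start k) (en k)))
        (fun i _ => Set.indicator_nonneg (fun j _ => ha j) i) hsum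
      have heq : ∑ i ∈ (range K).biUnion (fun k => Finset.Ico (start k) (en k)),
          Set.indicator (⋃ k, Set.Ico (start k) (en k)) a i
          = ∑ k ∈ range K, ∑ i ∈ Finset.Ico (start k) (en k), a i := by
        rw [Finset.sum_biUnion (fun k _ l _ hkl => hdisj k l hkl)]
        refine Finset.sum_congr rfl (fun k _ => Finset.sum_congr rfl (fun i hi => ?_))
        refine Set.indicator_of_mem (Set.mem_iUnion.2 ⟨k, ?_⟩) a
        rw [Set.mem_Ico]
        exact Finset.mem_Ico.1 hi
      have hK : (K : ℝ) ≤ ∑ k ∈ range K, ∑ i ∈ Finset.Ico (start k) (en k), a i := by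
        calc (K : ℝ) = ∑ _k ∈ range K, (1 : ℝ) := by simp
          _ ≤ _ := Finset.sum_le_sum (fun k _ => h1 k)
      linarith [heq ▸ hfin]
    obtain ⟨K, hK⟩ := exists_nat_gt (∑' i, Set.indicator (⋃ k, Set.Ico (start k) (en k)) a i)
    exact absurd (hbd K) (not_le.2 hK)
end

section
/- Let X₀ and X₁ be standard Borel spaces, π : X₀ → X₁ a Borel map, and μ ∼ ν equivalent probability measures on X₀. Then ∫_{X₁} (d(π_*μ)/d(π_*ν)) d(π_*μ) ≤ ∫_{X₀} (dμ/dν) dμ. -/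
open MeasureTheory ENNReal

theorem stmt_6 {X₀ X₁ : Type*} [MeasurableSpace X₀] [MeasurableSpace X₁]
    (π : X₀ → X₁) (hπ : Measurable π) (μ ν : Measure X₀)
    [IsProbabilityMeasure μ] [IsProbabilityMeasure ν] (hμν : μ ≪ ν) (hνμ : ν ≪ μ) :
    ∫⁻ y, (Measure.map π μ).rnDeriv (Measure.map π ν) y ∂(Measure.map π μ) ≤
      ∫⁻ x, μ.rnDeriv ν x ∂μ := by
  have _ : IsProbabilityMeasure (Measure.map π μ) := Measure.isProbabilityMeasure_map hπ.aemeasurable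
  set f := μ.rnDeriv ν with hf
  set g := (Measure.map π μ).rnDeriv (Measure.map π ν) with hgdef
  have hfm : Measurable f := Measure.measurable_rnDeriv _ _
  have hgm : Measurable g := Measure.measurable_rnDeriv _ _
  have hmapac : Measure.map π μ ≪ Measure.map π ν := hμν.map hπ
  have hwd : (Measure.map π ν).withDensity g = Measure.map π μ :=
    Measure.withDensity_rnDeriv_eq _ _ hmapac
  have hwd0 : ν.withDensity f = μ := Measure.withDensity_rnDeriv_eq _ _ hμν
  set R := ∫⁻ x, f x ∂μ with hR
  -- R = ∫ f^2 dν
  have hR2 : R = ∫⁻ x, f x ^ (2:ℝ) ∂ν := by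
    rw [hR, ← hwd0, lintegral_withDensity_eq_lintegral_mul _ hfm hfm]
    refine lintegral_congr fun x => ?_
    simp only [Pi.mul_apply]
    rw [show (2:ℝ) = ((2:ℕ):ℝ) by norm_num, ENNReal.rpow_natCast, sq]
  have key : ∀ n : ℕ, ∫⁻ y, min (g y) n ∂(Measure.map π μ) ≤ R := by
    intro n
    set gn : X₁ → ℝ≥0∞ := fun y => min (g y) n with hgn
    have hgnm : Measurable gn := hgm.min measurable_const
    set A := ∫⁻ y, gn y ∂(Measure.map π μ) with hA
    have hAle : A ≤ n := by
      calc A ≤ ∫⁻ _, (n:ℝ≥0∞) ∂(Measure.map π μ) :=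
            lintegral_mono fun y => min_le_right _ _
        _ = n := by simp
    have hAfin : A ≠ ⊤ := ne_top_of_le_ne_top (by simp) hAle
    -- A = ∫ (gn∘π) * f dν
    have hA1 : A = ∫⁻ x, (f * gn ∘ π) x ∂ν := by
      rw [hA, lintegral_map hgnm hπ, ← hwd0]
      exact lintegral_withDensity_eq_lintegral_mul _ hfm (hgnm.comp hπ)
    -- ∫ gn^2 d(map π ν) ≤ A
    have hsq : ∫⁻ y, gn y ^ (2:ℝ) ∂(Measure.map π ν) ≤ A := by
      have : ∫⁻ y, g y * gn y ∂(Measure.map π ν) = A := by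
        rw [hA, ← hwd, lintegral_withDensity_eq_lintegral_mul _ hgm hgnm]
        rfl
      rw [← this]
      refine lintegral_mono fun y => ?_
      rw [show (2:ℝ) = ((2:ℕ):ℝ) by norm_num, ENNReal.rpow_natCast, sq]
      exact mul_le_mul_left (min_le_left _ _) _
    -- Cauchy-Schwarz
    have hconj : Real.HolderConjugate 2 2 := Real.HolderConjugate.two_two
    have hCS := ENNReal.lintegral_mul_le_Lp_mul_Lq ν hconj hfm.aemeasurable
      ((hgnm.comp hπ).aemeasurable)
    have hsq' : ∫⁻ x, ((gn ∘ π) x) ^ (2:ℝ) ∂ν = ∫⁻ y, gn y ^ (2:ℝ) ∂(Measure.map π ν) :=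
      (lintegral_map (hgnm.pow_const _) hπ).symm
    have h2 : (∫⁻ a, (gn ∘ π) a ^ (2:ℝ) ∂ν) ^ ((1:ℝ)/2) ≤ A ^ ((1:ℝ)/2) := by
      refine ENNReal.rpow_le_rpow ?_ (by norm_num)
      rw [hsq']
      exact hsq
    have h1 : (∫⁻ a, f a ^ (2:ℝ) ∂ν) ^ ((1:ℝ)/2) = R ^ ((1:ℝ)/2) := by rw [← hR2]
    have hCS2 : A ≤ R ^ (1/2:ℝ) * A ^ (1/2:ℝ) :=
      hA1.trans_le (hCS.trans (mul_le_mul' h1.le h2))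
    -- conclude A ≤ R
    rcases eq_or_ne A 0 with h0 | h0
    · rw [hA] at h0; rw [hA, h0]; exact zero_le
    · rcases eq_or_ne R ⊤ with hRtop | hRfin
      · rw [hR] at hRtop; rw [hA, hR, hRtop]; exact le_top
      · have hAhalf : A ^ (1/2:ℝ) ≠ 0 := by
          simp [ENNReal.rpow_eq_zero_iff, h0, hAfin]
        have hAhalf' : A ^ (1/2:ℝ) ≠ ⊤ := by
          simp [ENNReal.rpow_eq_top_iff, h0, hAfin]
        have hAsplit : A = A ^ (1/2:ℝ) * A ^ (1/2:ℝ) := by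
          rw [← ENNReal.rpow_add _ _ h0 hAfin]
          norm_num
        have hhalf : A ^ (1/2:ℝ) ≤ R ^ (1/2:ℝ) :=
          (ENNReal.mul_le_mul_iff_left hAhalf hAhalf').mp
            (hAsplit.symm.trans_le hCS2)
        have h3 := ENNReal.rpow_le_rpow hhalf (by norm_num : (0:ℝ) ≤ 2)
        rw [← ENNReal.rpow_mul, ← ENNReal.rpow_mul] at h3
        norm_num at h3
        exact h3
  -- monotone convergence
  have hmono : Monotone fun n : ℕ => fun y => min (g y) (n:ℝ≥0∞) := by
    intro a b hab y
    exact min_le_min le_rfl (by exact_mod_cast hab)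
  have hsup : ∀ y, ⨆ n : ℕ, min (g y) (n:ℝ≥0∞) = g y := by
    intro y
    apply le_antisymm (iSup_le fun n => min_le_left _ _)
    rcases eq_or_ne (g y) ⊤ with h | h
    · rw [h]
      calc (⊤:ℝ≥0∞) = ⨆ n : ℕ, (n:ℝ≥0∞) := (ENNReal.iSup_natCast).symm
        _ ≤ ⨆ n : ℕ, min (⊤:ℝ≥0∞) (n:ℝ≥0∞) := by simp
    · obtain ⟨n, hn⟩ := ENNReal.exists_nat_gt h
      calc g y = min (g y) (n:ℝ≥0∞) := (min_eq_left hn.le).symm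
        _ ≤ ⨆ n : ℕ, min (g y) (n:ℝ≥0∞) := le_iSup (fun n : ℕ => min (g y) (n:ℝ≥0∞)) n
  calc ∫⁻ y, g y ∂(Measure.map π μ)
      = ∫⁻ y, ⨆ n : ℕ, min (g y) (n:ℝ≥0∞) ∂(Measure.map π μ) := by
        refine lintegral_congr fun y => (hsup y).symm
    _ = ⨆ n : ℕ, ∫⁻ y, min (g y) (n:ℝ≥0∞) ∂(Measure.map π μ) :=
        lintegral_iSup (fun n => hgm.min measurable_const) hmono
    _ ≤ R := iSup_le key
end

section
/- For a ∈ (0,1) let μ_a be the probability measure on {0,1} with μ_a(0) = a and μ_a(1) = 1 - a. Define ζ : (0,1) → ℝ by ζ(a) = log(2a) if a ≤ 1/2 and ζ(a) = -log(2(1-a)) if a ≥ 1/2. Then for all a, b ∈ (0,1): a²/b + (1-a)²/(1-b) ≤ exp(|ζ(a) - ζ(b)|²). -/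
open Real

lemma expUB3 {x : ℝ} (h0 : 0 ≤ x) (h1 : x ≤ 1) :
    Real.exp x ≤ 1 + x + x ^ 2 / 2 + 2 / 9 * x ^ 3 := by
  have h := Real.exp_bound' h0 h1 (n := 3) (by norm_num)
  simp [Finset.sum_range_succ, Nat.factorial] at h
  nlinarith [h]

lemma expUB4 {x : ℝ} (h0 : 0 ≤ x) (h1 : x ≤ 1) :
    Real.exp x ≤ 1 + x + x ^ 2 / 2 + x ^ 3 / 6 + 5 / 96 * x ^ 4 := by
  have h := Real.exp_bound' h0 h1 (n := 4) (by norm_num)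
  simp [Finset.sum_range_succ, Nat.factorial] at h
  nlinarith [h]

lemma expNegUB3 {v : ℝ} (h0 : 0 ≤ v) (h1 : v ≤ 1) :
    Real.exp (-v) ≤ 1 - v + v ^ 2 / 2 + 2 / 9 * v ^ 3 := by
  have habs : |(-v)| ≤ 1 := by rw [abs_neg, abs_of_nonneg h0]; exact h1
  have h := Real.exp_bound habs (n := 3) (by norm_num)
  rw [abs_neg, abs_of_nonneg h0] at h
  simp [Finset.sum_range_succ, Nat.factorial] at h
  rw [abs_le] at h
  nlinarith [h.1]

lemma expNegUB4 {v : ℝ} (h0 : 0 ≤ v) (h1 : v ≤ 1) :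
    Real.exp (-v) ≤ 1 - v + v ^ 2 / 2 - v ^ 3 / 6 + 5 / 96 * v ^ 4 := by
  have habs : |(-v)| ≤ 1 := by rw [abs_neg, abs_of_nonneg h0]; exact h1
  have h := Real.exp_bound habs (n := 4) (by norm_num)
  rw [abs_neg, abs_of_nonneg h0] at h
  simp [Finset.sum_range_succ, Nat.factorial] at h
  rw [abs_le] at h
  nlinarith [h.1]

lemma quadLB (r : ℝ) (h : 0 ≤ r) : (1 + r / 2) ^ 2 ≤ Real.exp r := by
  have h1 : 1 + r / 2 ≤ Real.exp (r / 2) := by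
    have := Real.add_one_le_exp (r / 2); linarith
  have h2 : Real.exp r = Real.exp (r / 2) * Real.exp (r / 2) := by
    rw [← Real.exp_add]; ring_nf
  rw [h2, pow_two]
  have hp : (0:ℝ) ≤ 1 + r / 2 := by linarith
  exact mul_le_mul h1 h1 hp (Real.exp_nonneg _)

/-- `exp s + exp (-s) - 1 ≤ exp (s²)` for `s ≥ 0`. -/
lemma coshB {s : ℝ} (h0 : 0 ≤ s) : Real.exp s + Real.exp (-s) - 1 ≤ Real.exp (s ^ 2) := by
  rcases le_or_gt s 1 with h1 | h1
  · have e1 := expUB4 h0 h1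
    have e2 := expNegUB4 h0 h1
    have e3 : (1 + s ^ 2 / 2) ^ 2 ≤ Real.exp (s ^ 2) := quadLB _ (by positivity)
    nlinarith [pow_nonneg h0 4]
  · have e1 : Real.exp s ≤ Real.exp (s ^ 2) := by
      apply Real.exp_le_exp.2; nlinarith
    have e2 : Real.exp (-s) ≤ 1 := Real.exp_le_one_iff.2 (by linarith)
    linarith

/-- Key lemma for the mixed case: `exp (v - v²) + exp (-v) ≤ 2` for `v ≥ 0`. -/
lemma keyK {v : ℝ} (h0 : 0 ≤ v) : Real.exp (v - v ^ 2) + Real.exp (-v) ≤ 2 := by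
  rcases le_or_gt v 1 with h1 | h1
  · have hx0 : 0 ≤ v - v ^ 2 := by nlinarith
    have hx1 : v - v ^ 2 ≤ 1 := by nlinarith
    have e1 := expUB3 hx0 hx1
    have e2 := expNegUB3 h0 h1
    nlinarith [pow_nonneg h0 3, sq_nonneg (v * (1 - v)), mul_nonneg (pow_nonneg h0 3) (sub_nonneg.2 h1), sq_nonneg v]
  · have e1 : Real.exp (v - v ^ 2) ≤ 1 := Real.exp_le_one_iff.2 (by nlinarith)
    have e2 : Real.exp (-v) ≤ 1 := Real.exp_le_one_iff.2 (by linarith)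
    linarith

/-- Same-side case: both `a, b ≤ 1/2`. -/
lemma lemmaA {a b : ℝ} (ha0 : 0 < a) (ha : a ≤ 1 / 2) (hb0 : 0 < b) (hb : b ≤ 1 / 2) :
    a ^ 2 / b + (1 - a) ^ 2 / (1 - b) ≤ Real.exp ((Real.log a - Real.log b) ^ 2) := by
  have hb1 : (0:ℝ) < 1 - b := by linarith
  have hid : a ^ 2 / b + (1 - a) ^ 2 / (1 - b) = 1 + (a - b) ^ 2 / (b * (1 - b)) := by
    field_simp; ring
  set s : ℝ := Real.log a - Real.log b with hs
  clear_value s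
  rcases le_or_gt a b with hab | hab
  · -- a ≤ b : (b-a) ≤ b * (-s), b ≤ 1 - b
    have hlog : Real.log (a / b) ≤ a / b - 1 := Real.log_le_sub_one_of_pos (by positivity)
    have hld : Real.log (a / b) = s := by rw [Real.log_div (ne_of_gt ha0) (ne_of_gt hb0), hs]
    have h1 : 1 - a / b ≤ -s := by rw [← hld]; linarith
    have h2 : b - a ≤ b * (-s) := by
      have he : 1 - a / b = (b - a) / b := by field_simp
      rw [he] at h1
      have := (div_le_iff₀ hb0).1 h1
      linarith
    have h3 : (a - b) ^ 2 ≤ s ^ 2 * b ^ 2 := by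
      have hba : 0 ≤ b - a := by linarith
      nlinarith [sq_nonneg (b - a)]
    have h4 : (a - b) ^ 2 / (b * (1 - b)) ≤ s ^ 2 := by
      rw [div_le_iff₀ (by positivity)]
      have hbb : b ^ 2 ≤ b * (1 - b) := by nlinarith
      nlinarith [sq_nonneg s]
    have h5 : 1 + s ^ 2 ≤ Real.exp (s ^ 2) := by
      have := Real.add_one_le_exp (s ^ 2); linarith
    rw [hid]; linarith [h4, h5]
  · -- b < a : G ≤ exp s + exp (-s) - 1
    have hs0 : 0 ≤ s := by
      have := Real.log_le_log hb0 hab.le; simp only [hs]; linarith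
    have hab' : b * (1 - b) ≥ a * b := by nlinarith
    have h1 : (a - b) ^ 2 / (b * (1 - b)) ≤ (a - b) ^ 2 / (a * b) :=
      div_le_div_of_nonneg_left (sq_nonneg _) (by positivity) hab'
    have h2 : (a - b) ^ 2 / (a * b) = a / b + b / a - 2 := by field_simp; ring
    have h3 : a / b = Real.exp s := by
      rw [hs, ← Real.log_div (ne_of_gt ha0) (ne_of_gt hb0), Real.exp_log (by positivity)]
    have h4 : b / a = Real.exp (-s) := by
      rw [hs, neg_sub, ← Real.log_div (ne_of_gt hb0) (ne_of_gt ha0), Real.exp_log (by positivity)]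
    have h5 := coshB hs0
    rw [hid]
    rw [h3, h4] at h2
    linarith [h1, h2, h5]

/-- Mixed case: `a ≤ 1/2 ≤ b`. -/
lemma lemmaM {a b : ℝ} (ha0 : 0 < a) (ha : a ≤ 1 / 2) (hb : 1 / 2 ≤ b) (hb1 : b < 1) :
    a ^ 2 / b + (1 - a) ^ 2 / (1 - b) ≤
      Real.exp ((Real.log (2 * a) + Real.log (2 * (1 - b))) ^ 2) := by
  have hb0 : (0:ℝ) < b := by linarith
  have h1b : (0:ℝ) < 1 - b := by linarith
  set u : ℝ := -Real.log (2 * a) with hu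
  set v : ℝ := -Real.log (2 * (1 - b)) with hv
  have hu0 : 0 ≤ u := by
    have : Real.log (2 * a) ≤ 0 := Real.log_nonpos (by linarith) (by linarith)
    simp [hu]; linarith
  have hv0 : 0 ≤ v := by
    have : Real.log (2 * (1 - b)) ≤ 0 := Real.log_nonpos (by linarith) (by linarith)
    simp [hv]; linarith
  have heu : Real.exp (-u) = 2 * a := by
    rw [hu, neg_neg, Real.exp_log (by linarith)]
  have hev : Real.exp (-v) = 2 * (1 - b) := by
    rw [hv, neg_neg, Real.exp_log (by linarith)]
  set p : ℝ := 1 - 2 * a with hp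
  set q : ℝ := 2 * b - 1 with hq
  have hp0 : 0 ≤ p := by simp [hp]; linarith
  have hq0 : 0 ≤ q := by simp [hq]; linarith
  have hpu : p ≤ u := by
    have := Real.add_one_le_exp (-u); rw [heu] at this; simp [hp]; linarith
  have hqv : q ≤ v := by
    have := Real.add_one_le_exp (-v); rw [hev] at this; simp [hq]; linarith
  -- G = N / D with N = 1 + p² + 2pq, D = 4 b (1-b)
  have hN0 : (0:ℝ) < 1 + p ^ 2 + 2 * p * q := by nlinarith
  have hD0 : (0:ℝ) < 4 * b * (1 - b) := by positivity
  have hG : a ^ 2 / b + (1 - a) ^ 2 / (1 - b) =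
      (1 + p ^ 2 + 2 * p * q) / (4 * b * (1 - b)) := by
    rw [hp, hq]; field_simp; ring
  -- bound log N
  have hlogN : Real.log (1 + p ^ 2 + 2 * p * q) ≤ u ^ 2 + 2 * u * v := by
    have h1 : Real.log (1 + p ^ 2 + 2 * p * q) ≤ p ^ 2 + 2 * p * q := by
      have := Real.log_le_sub_one_of_pos hN0; linarith
    have h2 : p ^ 2 ≤ u ^ 2 := by nlinarith
    have h3 : p * q ≤ u * v := by nlinarith
    linarith
  -- bound log D from below
  have hlogD : -(v ^ 2) ≤ Real.log (4 * b * (1 - b)) := by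
    have hfac : (4:ℝ) * b * (1 - b) = (2 * (1 - b)) * (2 * b) := by ring
    have hsplit : Real.log (4 * b * (1 - b)) =
        Real.log (2 * (1 - b)) + Real.log (2 * b) := by
      rw [hfac, Real.log_mul (by linarith) (by linarith)]
    have h2b : (2:ℝ) * b = 2 - Real.exp (-v) := by rw [hev]; ring
    have hK : Real.exp (v - v ^ 2) ≤ 2 * b := by
      have := keyK hv0; rw [h2b]; linarith
    have h1 : v - v ^ 2 ≤ Real.log (2 * b) := by
      have := Real.log_le_log (Real.exp_pos _) hK
      rwa [Real.log_exp] at this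
    have h2 : Real.log (2 * (1 - b)) = -v := by rw [hv, neg_neg]
    rw [hsplit, h2]; linarith
  -- conclude
  have hGpos : (0:ℝ) < (1 + p ^ 2 + 2 * p * q) / (4 * b * (1 - b)) := by positivity
  have hlogG : Real.log ((1 + p ^ 2 + 2 * p * q) / (4 * b * (1 - b))) ≤ (u + v) ^ 2 := by
    rw [Real.log_div (ne_of_gt hN0) (ne_of_gt hD0)]
    nlinarith [hlogN, hlogD]
  have hfin : (1 + p ^ 2 + 2 * p * q) / (4 * b * (1 - b)) ≤ Real.exp ((u + v) ^ 2) := by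
    calc (1 + p ^ 2 + 2 * p * q) / (4 * b * (1 - b))
        = Real.exp (Real.log ((1 + p ^ 2 + 2 * p * q) / (4 * b * (1 - b)))) := by
          rw [Real.exp_log hGpos]
      _ ≤ Real.exp ((u + v) ^ 2) := Real.exp_le_exp.2 hlogG
  rw [hG]
  have hexps : (Real.log (2 * a) + Real.log (2 * (1 - b))) ^ 2 = (u + v) ^ 2 := by
    rw [hu, hv]; ring
  rw [hexps]; exact hfin

/-- The map `ζ`, inverse of the cumulative distribution function of the two-sided
exponential density. -/
noncomputable def zetaFn (a : ℝ) : ℝ :=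
  if a ≤ 1 / 2 then Real.log (2 * a) else - Real.log (2 * (1 - a))

theorem stmt_7 (a b : ℝ) (ha : a ∈ Set.Ioo (0 : ℝ) 1) (hb : b ∈ Set.Ioo (0 : ℝ) 1) :
    a ^ 2 / b + (1 - a) ^ 2 / (1 - b) ≤ Real.exp (|zetaFn a - zetaFn b| ^ 2) := by
  obtain ⟨ha0, ha1⟩ := ha
  obtain ⟨hb0, hb1⟩ := hb
  rw [sq_abs]
  rcases le_or_gt a (1 / 2) with hA | hA <;> rcases le_or_gt b (1 / 2) with hB | hB
  · -- both ≤ 1/2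
    rw [zetaFn, zetaFn, if_pos hA, if_pos hB]
    have h : (Real.log (2 * a) - Real.log (2 * b)) ^ 2 = (Real.log a - Real.log b) ^ 2 := by
      rw [Real.log_mul (by norm_num) (ne_of_gt ha0), Real.log_mul (by norm_num) (ne_of_gt hb0)]
      ring
    rw [h]
    exact lemmaA ha0 hA hb0 hB
  · -- a ≤ 1/2 < b : mixed
    rw [zetaFn, zetaFn, if_pos hA, if_neg (not_le.2 hB)]
    have h : (Real.log (2 * a) - -Real.log (2 * (1 - b))) ^ 2
        = (Real.log (2 * a) + Real.log (2 * (1 - b))) ^ 2 := by ring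
    rw [h]
    exact lemmaM ha0 hA hB.le hb1
  · -- b ≤ 1/2 < a : mixed, reflected
    rw [zetaFn, zetaFn, if_neg (not_le.2 hA), if_pos hB]
    have key := lemmaM (a := 1 - a) (b := 1 - b) (by linarith) (by linarith)
      (by linarith) (by linarith)
    have hLHS : (1 - a) ^ 2 / (1 - b) + (1 - (1 - a)) ^ 2 / (1 - (1 - b))
        = a ^ 2 / b + (1 - a) ^ 2 / (1 - b) := by ring_nf
    have hexp : (Real.log (2 * (1 - a)) + Real.log (2 * (1 - (1 - b)))) ^ 2
        = (-Real.log (2 * (1 - a)) - Real.log (2 * b)) ^ 2 := by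
      have : (1:ℝ) - (1 - b) = b := by ring
      rw [this]; ring
    rw [hLHS, hexp] at key
    exact key
  · -- both > 1/2 : reflected same-side
    rw [zetaFn, zetaFn, if_neg (not_le.2 hA), if_neg (not_le.2 hB)]
    have key := lemmaA (a := 1 - a) (b := 1 - b) (by linarith) (by linarith)
      (by linarith) (by linarith)
    have hLHS : (1 - a) ^ 2 / (1 - b) + (1 - (1 - a)) ^ 2 / (1 - (1 - b))
        = a ^ 2 / b + (1 - a) ^ 2 / (1 - b) := by ring_nf
    have hexp : (Real.log (1 - a) - Real.log (1 - b)) ^ 2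
        = (-Real.log (2 * (1 - a)) - -Real.log (2 * (1 - b))) ^ 2 := by
      rw [Real.log_mul (by norm_num) (by linarith : (1:ℝ) - a ≠ 0),
        Real.log_mul (by norm_num) (by linarith : (1:ℝ) - b ≠ 0)]
      ring
    rw [hLHS, hexp] at key
    exact key
end

section
/- Let φ(t) = (1/2) exp(-|t|) be the two-sided exponential density. Then for every s ∈ ℝ: ∫_ℝ φ(t+s)²/φ(t) dt = (2/3) exp(|s|) + (1/3) exp(-2|s|), and this quantity is at most exp(s²). -/
open Real Set MeasureTheory

lemma integrand_eq (s t : ℝ) :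
    ((1 / 2) * Real.exp (-|t + s|)) ^ 2 / ((1 / 2) * Real.exp (-|t|)) =
      (1/2) * Real.exp (|t| - 2*|t + s|) := by
  rw [div_eq_iff (by positivity), mul_pow, sq (Real.exp _), ← Real.exp_add,
    mul_mul_mul_comm, ← Real.exp_add]
  have h : -|t + s| + -|t + s| = |t| - 2*|t + s| + -|t| := by ring
  rw [h]
  norm_num

lemma key (s : ℝ) (hs : 0 ≤ s) :
    (∫ t : ℝ, ((1 / 2) * Real.exp (-|t + s|)) ^ 2 / ((1 / 2) * Real.exp (-|t|))) =
      (2 / 3) * Real.exp s + (1 / 3) * Real.exp (-2 * s) := by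
  have hrw : (∫ t : ℝ, ((1 / 2) * Real.exp (-|t + s|)) ^ 2 / ((1 / 2) * Real.exp (-|t|))) =
      ∫ t : ℝ, (1/2) * Real.exp (|t| - 2*|t + s|) := by
    congr 1; funext t; exact integrand_eq s t
  rw [hrw]
  set f : ℝ → ℝ := fun t => (1/2) * Real.exp (|t| - 2*|t + s|) with hf
  -- integrability pieces
  have hcont : Continuous f := by fun_prop
  have hIic : IntegrableOn f (Iic (-s)) := by
    have h0 : IntegrableOn (fun t : ℝ => (1/2) * Real.exp (2*s) * Real.exp t) (Iic (-s)) :=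
      ((integrableOn_exp_Iic (-s)).const_mul _)
    refine h0.congr_fun (fun t ht => ?_) measurableSet_Iic
    simp only [mem_Iic] at ht
    simp only [hf]
    have h1 : |t| = -t := abs_of_nonpos (by linarith)
    have h2 : |t + s| = -(t+s) := abs_of_nonpos (by linarith)
    rw [h1, h2, mul_assoc, ← Real.exp_add]
    ring_nf
  have hIoc : IntegrableOn f (Ioc (-s) 0) := hcont.integrableOn_Ioc
  have hIoi : IntegrableOn f (Ioi 0) := by
    have h0 : IntegrableOn (fun t : ℝ => (1/2) * Real.exp (-2*s) * Real.exp (-(1:ℝ) * t)) (Ioi 0) :=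
      ((exp_neg_integrableOn_Ioi 0 one_pos).const_mul _)
    refine h0.congr_fun (fun t ht => ?_) measurableSet_Ioi
    simp only [mem_Ioi] at ht
    simp only [hf]
    have h1 : |t| = t := abs_of_pos ht
    have h2 : |t + s| = t + s := abs_of_nonneg (by linarith)
    rw [h1, h2, mul_assoc, ← Real.exp_add]
    ring_nf
  have hIic0 : IntegrableOn f (Iic 0) := by
    rw [← Set.Iic_union_Ioc_eq_Iic (by linarith : -s ≤ 0)]
    exact hIic.union hIoc
  -- split the integral
  rw [← intervalIntegral.integral_Iic_add_Ioi hIic0 hIoi]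
  have hsplit : (∫ t in Iic (0:ℝ), f t) = (∫ t in Iic (-s), f t) + ∫ t in Ioc (-s) 0, f t := by
    rw [← Set.Iic_union_Ioc_eq_Iic (by linarith : -s ≤ 0)]
    exact setIntegral_union (Set.Iic_disjoint_Ioc le_rfl) measurableSet_Ioc hIic hIoc
  rw [hsplit]
  -- piece A
  have hA : (∫ t in Iic (-s), f t) = (1/2) * Real.exp s := by
    have : (∫ t in Iic (-s), f t) = ∫ t in Iic (-s), (1/2) * Real.exp (2*s) * Real.exp t := by
      refine setIntegral_congr_fun measurableSet_Iic (fun t ht => ?_)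
      simp only [mem_Iic] at ht
      simp only [hf]
      have h1 : |t| = -t := abs_of_nonpos (by linarith)
      have h2 : |t + s| = -(t+s) := abs_of_nonpos (by linarith)
      rw [h1, h2, mul_assoc, ← Real.exp_add]
      ring_nf
    rw [this, integral_const_mul, integral_exp_Iic, mul_assoc, ← Real.exp_add,
      show 2*s + -s = s by ring]
  -- piece C
  have hC : (∫ t in Ioi (0:ℝ), f t) = (1/2) * Real.exp (-2*s) := by
    have : (∫ t in Ioi (0:ℝ), f t) = ∫ t in Ioi (0:ℝ), (1/2) * Real.exp (-2*s) * Real.exp (-t) := by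
      refine setIntegral_congr_fun measurableSet_Ioi (fun t ht => ?_)
      simp only [mem_Ioi] at ht
      simp only [hf]
      have h1 : |t| = t := abs_of_pos ht
      have h2 : |t + s| = t + s := abs_of_nonneg (by linarith)
      rw [h1, h2, mul_assoc, ← Real.exp_add]
      ring_nf
    rw [this, integral_const_mul, integral_exp_neg_Ioi_zero, mul_one]
  -- piece B
  have hB : (∫ t in Ioc (-s) (0:ℝ), f t) = (1/6) * Real.exp s - (1/6) * Real.exp (-2*s) := by
    rw [← intervalIntegral.integral_of_le (by linarith : -s ≤ (0:ℝ))]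
    have hcongr : (∫ t in (-s)..0, f t) = ∫ t in (-s)..0, (1/2) * Real.exp (-3*t - 2*s) := by
      refine intervalIntegral.integral_congr (fun t ht => ?_)
      rw [Set.uIcc_of_le (by linarith : -s ≤ (0:ℝ))] at ht
      obtain ⟨ht1, ht2⟩ := ht
      simp only [hf]
      have h1 : |t| = -t := abs_of_nonpos ht2
      have h2 : |t + s| = t + s := abs_of_nonneg (by linarith)
      rw [h1, h2]
      ring_nf
    rw [hcongr]
    have hderiv : ∀ t ∈ Set.uIcc (-s) (0:ℝ),
        HasDerivAt (fun u => -(1/6) * Real.exp (-3*u - 2*s)) ((1/2) * Real.exp (-3*t - 2*s)) t := by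
      intro t _
      have h1 : HasDerivAt (fun u : ℝ => -3*u - 2*s) (-3) t := by
        simpa using ((hasDerivAt_id t).const_mul (-3)).sub_const (2*s)
      have h2 := (Real.hasDerivAt_exp (-3*t - 2*s)).comp t h1
      have h3 : HasDerivAt (fun u => -(1/6) * Real.exp (-3*u - 2*s)) (-(1/6) * (Real.exp (-3*t - 2*s) * -3)) t :=
        h2.const_mul (-(1/6) : ℝ)
      convert h3 using 1
      ring
    rw [intervalIntegral.integral_eq_sub_of_hasDerivAt hderiv (Continuous.intervalIntegrable (by fun_prop) _ _)]
    ring_nf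
  rw [hA, hB, hC]
  ring

lemma exp_neg_le_quartic {y : ℝ} (hy : 0 ≤ y) :
    Real.exp (-y) ≤ 1 - y + y^2/2 - y^3/6 + y^4/24 := by
  set Q : ℝ := 1 + y + y^2/2 + y^3/6 + y^4/24 with hQdef
  have hQ4 : Q ≤ Real.exp y := by
    have := Real.sum_le_exp_of_nonneg hy 5
    simp [Finset.sum_range_succ, Nat.factorial] at this
    rw [hQdef]; linarith
  have hQpos : (0:ℝ) < Q := by positivity
  have h1 : Real.exp (-y) * Real.exp y = 1 := by rw [← Real.exp_add]; simp
  have hA : Real.exp (-y) * Q ≤ 1 := by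
    calc Real.exp (-y) * Q ≤ Real.exp (-y) * Real.exp y :=
          mul_le_mul_of_nonneg_left hQ4 (Real.exp_pos (-y)).le
      _ = 1 := h1
  have hB : (1:ℝ) ≤ (1 - y + y^2/2 - y^3/6 + y^4/24) * Q := by
    have hprod : (1 - y + y^2/2 - y^3/6 + y^4/24) * Q = 1 + y^6/72 + y^8/576 := by
      rw [hQdef]; ring
    rw [hprod]
    nlinarith [pow_nonneg hy 6, pow_nonneg hy 8]
  exact le_of_mul_le_mul_right (hA.trans hB) hQpos

lemma part2 {x : ℝ} (hx : 0 ≤ x) :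
    (2/3) * Real.exp x + (1/3) * Real.exp (-2 * x) ≤ Real.exp (x^2) := by
  rcases le_or_gt x 1 with h1 | h1
  · have hexp : Real.exp x ≤ (∑ m ∈ Finset.range 5, x ^ m / m.factorial) + x^5 * (5+1)/(Nat.factorial 5 * 5) :=
      Real.exp_bound' hx h1 (by norm_num)
    have hexp' : Real.exp x ≤ 1 + x + x^2/2 + x^3/6 + x^4/24 + x^5/100 := by
      simp [Finset.sum_range_succ, Nat.factorial] at hexp
      linarith
    have hneg : Real.exp (-2*x) ≤ 1 - 2*x + (2*x)^2/2 - (2*x)^3/6 + (2*x)^4/24 := by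
      have := exp_neg_le_quartic (y := 2*x) (by linarith)
      simpa using this
    have hlow : 1 + x^2 + (x^2)^2/2 ≤ Real.exp (x^2) := by
      have := Real.quadratic_le_exp_of_nonneg (x := x^2) (by positivity)
      linarith
    nlinarith [pow_nonneg hx 3, pow_nonneg hx 4, pow_nonneg hx 5, pow_le_one₀ hx h1 (n := 5), mul_nonneg (pow_nonneg hx 3) (sub_nonneg.mpr h1)]
  · have h2 : Real.exp (-2*x) ≤ Real.exp x := Real.exp_le_exp.mpr (by linarith)
    have h3 : Real.exp x ≤ Real.exp (x^2) := Real.exp_le_exp.mpr (by nlinarith)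
    linarith


theorem stmt_8 (s : ℝ) :
    (∫ t : ℝ, ((1 / 2) * Real.exp (-|t + s|)) ^ 2 / ((1 / 2) * Real.exp (-|t|))) =
      (2 / 3) * Real.exp |s| + (1 / 3) * Real.exp (-2 * |s|) ∧
    (2 / 3) * Real.exp |s| + (1 / 3) * Real.exp (-2 * |s|) ≤ Real.exp (s ^ 2) := by
  constructor
  · rcases le_or_gt 0 s with hs | hs
    · rw [abs_of_nonneg hs]
      exact key s hs
    · rw [abs_of_neg hs]
      have h1 : (∫ t : ℝ, ((1 / 2) * Real.exp (-|t + (-s)|)) ^ 2 / ((1 / 2) * Real.exp (-|t|)))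
          = ∫ t : ℝ, ((1 / 2) * Real.exp (-|t + s|)) ^ 2 / ((1 / 2) * Real.exp (-|t|)) := by
        rw [← MeasureTheory.integral_neg_eq_self
          (fun t : ℝ => ((1 / 2) * Real.exp (-|t + s|)) ^ 2 / ((1 / 2) * Real.exp (-|t|))) volume]
        congr 1
        funext t
        rw [show -t + s = -(t + -s) by ring, abs_neg, abs_neg]
      rw [← h1, key (-s) (by linarith)]
  · have h := part2 (x := |s|) (abs_nonneg s)
    rwa [sq_abs] at h
end

section
/- For every t ≥ 0, (exp(t) - 1)² ≤ exp(3t²/2) - 1. -/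
theorem stmt_9 (t : ℝ) (ht : 0 ≤ t) :
    (Real.exp t - 1) ^ 2 ≤ Real.exp (3 * t ^ 2 / 2) - 1 := by
  rcases le_or_gt (4/3) t with hge | hlt
  · -- large t : (e^t-1)^2 ≤ e^{2t} - 1 ≤ e^{3t²/2} - 1
    have h1 : Real.exp (t + t) ≤ Real.exp (3 * t ^ 2 / 2) :=
      Real.exp_le_exp.2 (by nlinarith)
    have h2 : Real.exp (t + t) = Real.exp t * Real.exp t := Real.exp_add t t
    have h3 : (1:ℝ) ≤ Real.exp t := Real.one_le_exp ht
    nlinarith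
  · -- small t : Taylor bounds
    have h0 := ht
    have h1 : t ≤ 4/3 := hlt.le
    have hs0 : 0 ≤ t/2 := by positivity
    have hs1 : t/2 ≤ 1 := by linarith
    have hV := Real.exp_bound' hs0 hs1 (n := 5) (by norm_num)
    have hV' : Real.exp (t/2) ≤ 1 + t/2 + (t/2)^2/2 + (t/2)^3/6 + (t/2)^4/24 + (t/2)^5/100 := by
      refine hV.trans_eq ?_
      simp [Finset.sum_range_succ, Nat.factorial]
      ring
    have he : (0:ℝ) < Real.exp (t/2) := Real.exp_pos _
    have hexp_t : Real.exp t = Real.exp (t/2) * Real.exp (t/2) := by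
      rw [← Real.exp_add]; congr 1; ring
    have hW : Real.exp t ≤ 1 + t + t^2/2 + t^3/6 + t^4/24 + t^5/40 := by
      rw [hexp_t]
      nlinarith [mul_le_mul hV' hV' he.le (by positivity :
          (0:ℝ) ≤ 1 + t/2 + (t/2)^2/2 + (t/2)^3/6 + (t/2)^4/24 + (t/2)^5/100),
        pow_nonneg h0 5, pow_nonneg h0 6, pow_nonneg h0 7, pow_nonneg h0 8,
        pow_nonneg h0 9, pow_nonneg h0 10,
        mul_nonneg (pow_nonneg h0 5) (sub_nonneg.2 h1)]
    have hx0 : (0:ℝ) ≤ 3 * t ^ 2 / 2 := by positivity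
    have hL := Real.sum_le_exp_of_nonneg hx0 5
    have hL' : 1 + (3 * t ^ 2 / 2) + (3 * t ^ 2 / 2) ^ 2 / 2 + (3 * t ^ 2 / 2) ^ 3 / 6
        + (3 * t ^ 2 / 2) ^ 4 / 24 ≤ Real.exp (3 * t ^ 2 / 2) := by
      refine le_trans (le_of_eq ?_) hL
      simp [Finset.sum_range_succ, Nat.factorial]
    have hpoly : (t + t^2/2 + t^3/6 + t^4/24 + t^5/40) ^ 2 ≤
        (3 * t ^ 2 / 2) + (3 * t ^ 2 / 2) ^ 2 / 2 + (3 * t ^ 2 / 2) ^ 3 / 6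
          + (3 * t ^ 2 / 2) ^ 4 / 24 := by
      nlinarith [sq_nonneg t, sq_nonneg (t - 2/3), mul_nonneg h0 (sub_nonneg.2 h1),
        sq_nonneg (t*(4/3 - t)), pow_nonneg h0 3, pow_nonneg h0 4, pow_nonneg h0 5,
        pow_nonneg h0 6, pow_nonneg h0 7, pow_nonneg h0 8,
        mul_nonneg (mul_nonneg h0 (sub_nonneg.2 h1)) (sq_nonneg t),
        mul_nonneg (mul_nonneg h0 (sub_nonneg.2 h1)) (pow_nonneg h0 4)]
    have hE1 : (0:ℝ) ≤ Real.exp t - 1 := by linarith [Real.one_le_exp ht]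
    have hsq : (Real.exp t - 1) ^ 2 ≤ (t + t^2/2 + t^3/6 + t^4/24 + t^5/40) ^ 2 := by
      apply pow_le_pow_left₀ hE1 (by linarith)
    linarith
end

section
/- Let φ : ℝ → (0, +∞) be a continuous probability density such that log φ is Lipschitz with constant M ≥ 0. Then for every s ∈ ℝ, the quantity θ(s) = ∫_ℝ φ(t+s)²/φ(t) dt satisfies (1/2) log θ(s) ≤ (3/4) M² s². -/
open MeasureTheory Real

theorem stmt_10 (φ : ℝ → ℝ) (hpos : ∀ t, 0 < φ t) (hcont : Continuous φ)
    (hint : ∫ t, φ t = 1) (M : ℝ) (hM : 0 ≤ M)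
    (hLip : ∀ x y, |Real.log (φ x) - Real.log (φ y)| ≤ M * |x - y|) (s : ℝ) :
    (1 / 2) * Real.log (∫ t, (φ (t + s)) ^ 2 / φ t) ≤ (3 / 4) * M ^ 2 * s ^ 2 := by
  set a : ℝ := M * |s| with ha
  have ha0 : 0 ≤ a := mul_nonneg hM (abs_nonneg s)
  have ha2 : a ^ 2 = M ^ 2 * s ^ 2 := by
    rw [ha, mul_pow, sq_abs]
  -- integrability of φ
  have hφint : Integrable φ := by
    by_contra h
    rw [integral_undef h] at hint
    norm_num at hint
  have hφs : Integrable (fun t => φ (t + s)) := hφint.comp_add_right s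
  have hφs1 : ∫ t, φ (t + s) = 1 := by
    rw [integral_add_right_eq_self φ s, hint]
  -- pointwise bound
  have hpt : ∀ t : ℝ, φ (t + s) ^ 2 / φ t ≤ (Real.exp a + Real.exp (-a)) * φ (t + s) - φ t := by
    intro t
    have h1 : |Real.log (φ (t + s)) - Real.log (φ t)| ≤ a := by
      have := hLip (t + s) t
      simpa using this
    have hlog : Real.log (φ (t + s) / φ t) = Real.log (φ (t + s)) - Real.log (φ t) :=
      Real.log_div (hpos _).ne' (hpos t).ne'
    have hle : Real.log (φ (t + s) / φ t) ≤ a := by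
      rw [hlog]; exact (abs_le.mp h1).2
    have hge : -a ≤ Real.log (φ (t + s) / φ t) := by
      rw [hlog]; exact (abs_le.mp h1).1
    have hrpos : 0 < φ (t + s) / φ t := div_pos (hpos _) (hpos t)
    have hub : φ (t + s) / φ t ≤ Real.exp a := by
      rw [← Real.exp_log hrpos]; exact Real.exp_le_exp.mpr hle
    have hlb : Real.exp (-a) ≤ φ (t + s) / φ t := by
      rw [← Real.exp_log hrpos]; exact Real.exp_le_exp.mpr hge
    -- chord bound: (r - e^{-a})(e^a - r) ≥ 0
    have hprod : 0 ≤ (φ (t + s) / φ t - Real.exp (-a)) * (Real.exp a - φ (t + s) / φ t) :=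
      mul_nonneg (by linarith) (by linarith)
    have hee : Real.exp (-a) * Real.exp a = 1 := by
      rw [← Real.exp_add]; simp
    have hφt : 0 < φ t := hpos t
    have key : (φ (t + s) / φ t) ^ 2 ≤ (Real.exp a + Real.exp (-a)) * (φ (t + s) / φ t) - 1 := by
      nlinarith [hprod, hee]
    have := mul_le_mul_of_nonneg_right key hφt.le
    calc φ (t + s) ^ 2 / φ t = (φ (t + s) / φ t) ^ 2 * φ t := by
          field_simp
      _ ≤ ((Real.exp a + Real.exp (-a)) * (φ (t + s) / φ t) - 1) * φ t := this
      _ = (Real.exp a + Real.exp (-a)) * φ (t + s) - φ t := by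
          field_simp
  -- integrate
  have hgint : Integrable (fun t => (Real.exp a + Real.exp (-a)) * φ (t + s) - φ t) :=
    (hφs.const_mul _).sub hφint
  have hθle : (∫ t, φ (t + s) ^ 2 / φ t) ≤ Real.exp a + Real.exp (-a) - 1 := by
    have h1 : (∫ t, φ (t + s) ^ 2 / φ t)
        ≤ ∫ t, ((Real.exp a + Real.exp (-a)) * φ (t + s) - φ t) := by
      apply integral_mono_of_nonneg
      · filter_upwards with t
        exact div_nonneg (sq_nonneg _) (hpos t).le
      · exact hgint
      · filter_upwards with t; exact hpt t
    calc (∫ t, φ (t + s) ^ 2 / φ t) ≤ _ := h1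
      _ = (Real.exp a + Real.exp (-a)) * (∫ t, φ (t + s)) - ∫ t, φ t := by
          rw [integral_sub (hφs.const_mul _) hφint, MeasureTheory.integral_const_mul]
      _ = Real.exp a + Real.exp (-a) - 1 := by rw [hφs1, hint]; ring
  -- cosh bound
  have hcosh : Real.exp a + Real.exp (-a) ≤ 2 * Real.exp (a ^ 2 / 2) := by
    have := Real.cosh_le_exp_half_sq a
    rw [Real.cosh_eq] at this
    linarith
  have hu1 : (1 : ℝ) ≤ Real.exp (a ^ 2 / 2) :=
    Real.one_le_exp (by positivity)
  have hcube : Real.exp (3 / 2 * a ^ 2) = (Real.exp (a ^ 2 / 2)) ^ 3 := by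
    rw [← Real.exp_nat_mul]; ring_nf
  have hfinal : (∫ t, φ (t + s) ^ 2 / φ t) ≤ Real.exp (3 / 2 * a ^ 2) := by
    rw [hcube]
    have h2 : 0 ≤ (Real.exp (a ^ 2 / 2) - 1) *
        (Real.exp (a ^ 2 / 2) ^ 2 + Real.exp (a ^ 2 / 2) - 1) :=
      mul_nonneg (by linarith) (by nlinarith)
    nlinarith [hθle, hcosh, hu1, h2]
  have hθ0 : 0 ≤ ∫ t, φ (t + s) ^ 2 / φ t :=
    integral_nonneg fun t => div_nonneg (sq_nonneg _) (hpos t).le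
  rcases eq_or_lt_of_le hθ0 with h0 | h0
  · rw [← h0, Real.log_zero, mul_zero]
    positivity
  · have hlog : Real.log (∫ t, φ (t + s) ^ 2 / φ t) ≤ 3 / 2 * a ^ 2 := by
      rw [← Real.log_exp (3 / 2 * a ^ 2)]
      exact Real.log_le_log h0 hfinal
    rw [ha2] at hlog
    linarith
end

section
/- Let φ : ℝ → (0, +∞) be a probability density such that ψ = log φ is differentiable and ψ' is Lipschitz with constant M ≥ 0. Then for every s ∈ ℝ, θ(s) = ∫_ℝ φ(t+s)²/φ(t) dt satisfies (1/2) log θ(s) ≤ M s². -/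
lemma mvt_aux (f : ℝ → ℝ) (hf : Differentiable ℝ f) (x u : ℝ) :
    ∃ c, |c - x| ≤ |u| ∧ |c - (x + u)| ≤ |u| ∧ f (x + u) - f x = u * deriv f c := by
  rcases lt_trichotomy u 0 with hu | hu | hu
  · obtain ⟨c, hc, hc'⟩ := exists_hasDerivAt_eq_slope f (deriv f) (by linarith : x + u < x)
      hf.continuous.continuousOn (fun y _ => (hf y).hasDerivAt)
    have hu' : |u| = -u := abs_of_neg hu
    refine ⟨c, ?_, ?_, ?_⟩
    · rw [hu', abs_le]; exact ⟨by linarith [hc.1, hc.2], by linarith [hc.1, hc.2]⟩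
    · rw [hu', abs_le]; exact ⟨by linarith [hc.1, hc.2], by linarith [hc.1, hc.2]⟩
    · have hne : u ≠ 0 := ne_of_lt hu
      rw [hc', show x - (x + u) = -u from by ring,
        show u * ((f x - f (x + u)) / -u) = (f (x + u) - f x) * (u / u) from by ring,
        div_self hne, mul_one]
  · exact ⟨x, by simp [hu], by simp [hu], by simp [hu]⟩
  · obtain ⟨c, hc, hc'⟩ := exists_hasDerivAt_eq_slope f (deriv f) (by linarith : x < x + u)
      hf.continuous.continuousOn (fun y _ => (hf y).hasDerivAt)
    have hu' : |u| = u := abs_of_pos hu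
    refine ⟨c, ?_, ?_, ?_⟩
    · rw [hu', abs_le]; exact ⟨by linarith [hc.1, hc.2], by linarith [hc.1, hc.2]⟩
    · rw [hu', abs_le]; exact ⟨by linarith [hc.1, hc.2], by linarith [hc.1, hc.2]⟩
    · have hne : u ≠ 0 := ne_of_gt hu
      rw [hc', show x + u - x = u from by ring]
      field_simp

theorem stmt_11 (φ : ℝ → ℝ) (hpos : ∀ t, 0 < φ t)
    (hint : ∫ t, φ t = 1) (M : ℝ) (hM : 0 ≤ M)
    (hdiff : Differentiable ℝ (fun t => Real.log (φ t)))
    (hLip : ∀ x y, |deriv (fun t => Real.log (φ t)) x - deriv (fun t => Real.log (φ t)) y| ≤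
      M * |x - y|) (s : ℝ) :
    (1 / 2) * Real.log (∫ t, (φ (t + s)) ^ 2 / φ t) ≤ M * s ^ 2 := by
  set ψ : ℝ → ℝ := fun t => Real.log (φ t) with hψ
  have hexp : ∀ t, Real.exp (ψ t) = φ t := fun t => Real.exp_log (hpos t)
  -- pointwise bound
  have key : ∀ t, (φ (t + s)) ^ 2 / φ t ≤ Real.exp (2 * M * s ^ 2) * φ (t + 2 * s) := by
    intro t
    obtain ⟨c₁, _, hc₁b, hc₁⟩ := mvt_aux ψ hdiff t s
    obtain ⟨c₂, hc₂a, _, hc₂⟩ := mvt_aux ψ hdiff (t + s) s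
    have hdist : |c₁ - c₂| ≤ 2 * |s| := by
      calc |c₁ - c₂| ≤ |c₁ - (t + s)| + |(t + s) - c₂| := abs_sub_le _ _ _
        _ ≤ |s| + |s| := by
            have := hc₂a; rw [abs_sub_comm] at this; exact add_le_add hc₁b this
        _ = 2 * |s| := by ring
    have hbound : 2 * ψ (t + s) - ψ t - ψ (t + 2 * s) ≤ 2 * M * s ^ 2 := by
      have heq : 2 * ψ (t + s) - ψ t - ψ (t + 2 * s) = s * (deriv ψ c₁ - deriv ψ c₂) := by
        have h2 : t + s + s = t + 2 * s := by ring
        rw [h2] at hc₂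
        nlinarith [hc₁, hc₂]
      rw [heq]
      calc s * (deriv ψ c₁ - deriv ψ c₂) ≤ |s * (deriv ψ c₁ - deriv ψ c₂)| := le_abs_self _
        _ = |s| * |deriv ψ c₁ - deriv ψ c₂| := abs_mul _ _
        _ ≤ |s| * (M * |c₁ - c₂|) := by
            exact mul_le_mul_of_nonneg_left (hLip c₁ c₂) (abs_nonneg s)
        _ ≤ |s| * (M * (2 * |s|)) := by
            exact mul_le_mul_of_nonneg_left (mul_le_mul_of_nonneg_left hdist hM) (abs_nonneg s)
        _ = 2 * M * |s| ^ 2 := by ring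
        _ = 2 * M * s ^ 2 := by rw [sq_abs]
    have lhs_eq : (φ (t + s)) ^ 2 / φ t = Real.exp (2 * ψ (t + s) - ψ t) := by
      rw [← hexp (t + s), ← hexp t, sq, ← Real.exp_add, ← Real.exp_sub]
      congr 1
      ring
    have rhs_eq : Real.exp (2 * M * s ^ 2) * φ (t + 2 * s)
        = Real.exp (2 * M * s ^ 2 + ψ (t + 2 * s)) := by
      rw [Real.exp_add, hexp]
    rw [lhs_eq, rhs_eq]
    exact Real.exp_le_exp.mpr (by linarith)
  -- basic facts
  have hφcont : Continuous φ := by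
    have : Continuous fun t => Real.exp (ψ t) := Real.continuous_exp.comp hdiff.continuous
    simpa [funext hexp] using this
  have hφint : MeasureTheory.Integrable φ := by
    by_contra h
    rw [MeasureTheory.integral_undef h] at hint
    norm_num at hint
  have hg_int : MeasureTheory.Integrable (fun t => Real.exp (2 * M * s ^ 2) * φ (t + 2 * s)) :=
    (hφint.comp_add_right (2 * s)).const_mul _
  have hg_val : (∫ t, Real.exp (2 * M * s ^ 2) * φ (t + 2 * s)) = Real.exp (2 * M * s ^ 2) := by
    rw [MeasureTheory.integral_const_mul, MeasureTheory.integral_add_right_eq_self φ (2*s), hint, mul_one]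
  set θ := ∫ t, (φ (t + s)) ^ 2 / φ t with hθ
  have hθ_nonneg : 0 ≤ θ :=
    MeasureTheory.integral_nonneg fun t => div_nonneg (sq_nonneg _) (hpos t).le
  have hlogθ : Real.log θ ≤ 2 * M * s ^ 2 := by
    by_cases hi : MeasureTheory.Integrable (fun t => (φ (t + s)) ^ 2 / φ t)
    · have hθle : θ ≤ Real.exp (2 * M * s ^ 2) := by
        rw [hθ, ← hg_val]
        exact MeasureTheory.integral_mono hi hg_int key
      rcases eq_or_lt_of_le hθ_nonneg with h0 | h0
      · rw [← h0, Real.log_zero]; nlinarith [mul_nonneg hM (sq_nonneg s)]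
      · calc Real.log θ ≤ Real.log (Real.exp (2 * M * s ^ 2)) :=
              Real.log_le_log h0 hθle
          _ = 2 * M * s ^ 2 := Real.log_exp _
    · rw [hθ, MeasureTheory.integral_undef hi, Real.log_zero]; nlinarith [mul_nonneg hM (sq_nonneg s)]
  linarith
end

section
/- For the density φ(t) = (2/π)(1+t²)^{-2} on ℝ and any κ > 0: -log(∫_ℝ √(φ(t+κ)φ(t)) dt) = log(1 + κ²/4). -/
open Real MeasureTheory Filter Topology

private lemma pos1 (t : ℝ) : (0:ℝ) < 1 + t^2 := by positivity

noncomputable def Faux (κ : ℝ) (t : ℝ) : ℝ :=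
  (κ^2+4)⁻¹ * arctan t + (κ^2+4)⁻¹ * arctan (t+κ)
    + (κ*(κ^2+4))⁻¹ * (log (1+(t+κ)^2) - log (1+t^2))

private lemma hasDerivF (κ : ℝ) (hκ : 0 < κ) (t : ℝ) :
    HasDerivAt (Faux κ) (((1+(t+κ)^2) * (1+t^2))⁻¹) t := by
  have h2 : HasDerivAt (fun t : ℝ => t + κ) 1 t := (hasDerivAt_id t).add_const κ
  have h1 : HasDerivAt (fun t : ℝ => arctan t) (1/(1+t^2)) t := by
    simpa using hasDerivAt_arctan t
  have h3 : HasDerivAt (fun t : ℝ => arctan (t+κ)) (1/(1+(t+κ)^2)) t := by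
    simpa [Function.comp_def] using (hasDerivAt_arctan (t+κ)).comp t h2
  have h4 : HasDerivAt (fun t : ℝ => 1 + (t+κ)^2) (2*(t+κ)) t := by
    simpa using ((h2.pow 2).const_add 1)
  have h5 : HasDerivAt (fun t : ℝ => log (1+(t+κ)^2)) (2*(t+κ)/(1+(t+κ)^2)) t :=
    h4.log (pos1 (t+κ)).ne'
  have h6' : HasDerivAt (fun t : ℝ => 1 + t^2) (2*t) t := by
    simpa using (((hasDerivAt_id t).pow 2).const_add 1)
  have h6 : HasDerivAt (fun t : ℝ => log (1+t^2)) (2*t/(1+t^2)) t :=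
    h6'.log (pos1 t).ne'
  have h := ((h1.const_mul ((κ^2+4)⁻¹)).add (h3.const_mul ((κ^2+4)⁻¹))).add
    ((h5.sub h6).const_mul ((κ*(κ^2+4))⁻¹))
  refine h.congr_deriv ?_
  have hA := (pos1 t).ne'
  have hB := (pos1 (t+κ)).ne'
  have hk : κ ≠ 0 := hκ.ne'
  have hk4 : (κ^2+4 : ℝ) ≠ 0 := by positivity
  field_simp
  ring

private lemma ratio_tendsto (κ : ℝ) (l : Filter ℝ)
    (hl : Tendsto (fun t : ℝ => t⁻¹) l (𝓝 0)) (hne : ∀ᶠ t in l, t ≠ 0) :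
    Tendsto (fun t : ℝ => (1+(t+κ)^2)/(1+t^2)) l (𝓝 1) := by
  have hcont : ContinuousAt (fun u : ℝ => (u^2+(1+κ*u)^2)/(u^2+1)) 0 := by
    apply ContinuousAt.div (by fun_prop) (by fun_prop)
    norm_num
  have h := hcont.tendsto.comp hl
  norm_num [Function.comp_def] at h
  apply h.congr'
  filter_upwards [hne] with t ht
  have h1 : (1:ℝ) + t^2 ≠ 0 := (pos1 t).ne'
  field_simp

private lemma logdiff_tendsto (κ : ℝ) (l : Filter ℝ)
    (hl : Tendsto (fun t : ℝ => t⁻¹) l (𝓝 0)) (hne : ∀ᶠ t in l, t ≠ 0) :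
    Tendsto (fun t : ℝ => log (1+(t+κ)^2) - log (1+t^2)) l (𝓝 0) := by
  have hr := ratio_tendsto κ l hl hne
  have h : Tendsto (fun t : ℝ => log ((1+(t+κ)^2)/(1+t^2))) l (𝓝 0) := by
    have h2 := (Real.continuousAt_log one_ne_zero).tendsto.comp hr
    simpa [Function.comp_def] using h2
  apply h.congr
  intro t
  rw [Real.log_div (pos1 (t+κ)).ne' (pos1 t).ne']

private lemma inv_atBot : Tendsto (fun t : ℝ => t⁻¹) atBot (𝓝 0) := by
  have h1 : Tendsto (fun t : ℝ => -t) atBot atTop := tendsto_neg_atBot_atTop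
  have h2 : Tendsto (fun s : ℝ => s⁻¹) atTop (𝓝 (0:ℝ)) := tendsto_inv_atTop_zero
  have h3 : Tendsto (fun t : ℝ => (-t)⁻¹) atBot (𝓝 (0:ℝ)) := h2.comp h1
  have h4 := h3.neg
  simpa [inv_neg] using h4

private lemma F_top (κ : ℝ) :
    Tendsto (Faux κ) atTop (𝓝 ((κ^2+4)⁻¹ * π)) := by
  have ha : Tendsto arctan atTop (𝓝 (π/2)) :=
    tendsto_nhds_of_tendsto_nhdsWithin tendsto_arctan_atTop
  have hshift : Tendsto (fun t : ℝ => t + κ) atTop atTop :=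
    tendsto_atTop_add_const_right atTop κ tendsto_id
  have ha2 : Tendsto (fun t : ℝ => arctan (t+κ)) atTop (𝓝 (π/2)) := ha.comp hshift
  have hne : ∀ᶠ t : ℝ in atTop, t ≠ 0 := eventually_ne_atTop 0
  have hlog := logdiff_tendsto κ atTop tendsto_inv_atTop_zero hne
  have h := ((ha.const_mul ((κ^2+4)⁻¹)).add (ha2.const_mul ((κ^2+4)⁻¹))).add
    (hlog.const_mul ((κ*(κ^2+4))⁻¹))
  convert h using 1
  · rfl
  ring

private lemma F_bot (κ : ℝ) :
    Tendsto (Faux κ) atBot (𝓝 (-((κ^2+4)⁻¹ * π))) := by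
  have ha : Tendsto arctan atBot (𝓝 (-(π/2))) :=
    tendsto_nhds_of_tendsto_nhdsWithin tendsto_arctan_atBot
  have hshift : Tendsto (fun t : ℝ => t + κ) atBot atBot :=
    tendsto_atBot_add_const_right atBot κ tendsto_id
  have ha2 : Tendsto (fun t : ℝ => arctan (t+κ)) atBot (𝓝 (-(π/2))) := ha.comp hshift
  have hne : ∀ᶠ t : ℝ in atBot, t ≠ 0 := eventually_ne_atBot 0
  have hlog := logdiff_tendsto κ atBot inv_atBot hne
  have h := ((ha.const_mul ((κ^2+4)⁻¹)).add (ha2.const_mul ((κ^2+4)⁻¹))).add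
    (hlog.const_mul ((κ*(κ^2+4))⁻¹))
  convert h using 1
  · rfl
  ring

private lemma integrable_f (κ : ℝ) :
    Integrable (fun t : ℝ => ((1+(t+κ)^2) * (1+t^2))⁻¹) := by
  apply integrable_inv_one_add_sq.mono'
  · apply Continuous.aestronglyMeasurable
    apply Continuous.inv₀ (by fun_prop)
    intro t
    exact (mul_pos (pos1 (t+κ)) (pos1 t)).ne'
  · filter_upwards with t
    rw [Real.norm_eq_abs, abs_of_pos (by positivity)]
    apply inv_anti₀ (pos1 t)
    nlinarith [sq_nonneg (t+κ), pos1 t]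

private lemma key_integral (κ : ℝ) (hκ : 0 < κ) :
    ∫ t : ℝ, ((1+(t+κ)^2) * (1+t^2))⁻¹ = 2 * π / (κ^2+4) := by
  rw [integral_of_hasDerivAt_of_tendsto (hasDerivF κ hκ) (integrable_f κ)
    (F_bot κ) (F_top κ)]
  ring

theorem stmt_12 (κ : ℝ) (hκ : 0 < κ) :
    - Real.log (∫ t : ℝ, Real.sqrt
        (((2 / Real.pi) * (1 + (t + κ) ^ 2)⁻¹ ^ 2) * ((2 / Real.pi) * (1 + t ^ 2)⁻¹ ^ 2))) =
      Real.log (1 + κ ^ 2 / 4) := by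
  have hπ : (0:ℝ) < π := Real.pi_pos
  have hint : ∀ t : ℝ, Real.sqrt
      (((2 / Real.pi) * (1 + (t + κ) ^ 2)⁻¹ ^ 2) * ((2 / Real.pi) * (1 + t ^ 2)⁻¹ ^ 2))
      = (2 / π) * ((1+(t+κ)^2) * (1+t^2))⁻¹ := by
    intro t
    rw [show ((2 / Real.pi) * (1 + (t + κ) ^ 2)⁻¹ ^ 2) * ((2 / Real.pi) * (1 + t ^ 2)⁻¹ ^ 2)
        = ((2 / π) * ((1+(t+κ)^2) * (1+t^2))⁻¹)^2 by
      rw [mul_inv]; ring]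
    exact Real.sqrt_sq (by positivity)
  simp only [hint]
  rw [integral_const_mul, key_integral κ hκ]
  have hk4 : (0:ℝ) < κ^2+4 := by positivity
  have : 2 / π * (2 * π / (κ ^ 2 + 4)) = (1 + κ^2/4)⁻¹ := by
    field_simp
    ring
  rw [this, Real.log_inv, neg_neg]
end

section
/- Let G be a countable group, F : G → ℝ a bounded function, and λ ∈ (0,1). For g ∈ G define d(g) = ∑_{h ∈ G} |F(gh) - F(h)|² (possibly infinite). For each g let μ_g be the probability measure on a standard Borel space X₀ whose density with respect to a fixed probability measure μ₀ takes only the values ρ_g λ and ρ_g (on a measurable set A_g and its complement, respectively, with ρ_g = (λ μ₀(A_g) + μ₀(X₀ \ A_g))^{-1}). Then for all g, h ∈ G: log ∫_{X₀} (dμ_h/dμ_{gh}) dμ_h ≤ λ^{-2} μ₀(A_{gh} Δ A_h), where Δ denotes symmetric difference. -/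
open MeasureTheory Classical in

set_option maxHeartbeats 1000000 in
theorem stmt_14 {G : Type*} [Group G] [Countable G] {X₀ : Type*} [MeasurableSpace X₀]
    (F : G → ℝ) (C : ℝ) (hFbd : ∀ g, |F g| ≤ C)
    (L : ℝ) (hL : L ∈ Set.Ioo (0 : ℝ) 1)
    (μ₀ : Measure X₀) [IsProbabilityMeasure μ₀]
    (A : G → Set X₀) (hA : ∀ g, MeasurableSet (A g))
    (ρ : G → ℝ)
    (hρ : ∀ g, ρ g = (L * (μ₀ (A g)).toReal + (μ₀ ((A g)ᶜ)).toReal)⁻¹)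
    (f : G → X₀ → ℝ)
    (hf : ∀ g x, f g x = if x ∈ A g then ρ g * L else ρ g) :
    ∀ g h : G,
      Real.log (∫ x, (f h x) ^ 2 / f (g * h) x ∂μ₀) ≤
        (L⁻¹) ^ 2 * (μ₀ (symmDiff (A (g * h)) (A h))).toReal := by
  obtain ⟨hL0, hL1⟩ := hL
  intro g h
  set S : Set X₀ := A h with hSdef
  set T : Set X₀ := A (g * h) with hTdef
  have hS : MeasurableSet S := hA h
  have hT : MeasurableSet T := hA (g * h)
  set a : ℝ := (μ₀ (S ∩ T)).toReal with hadef
  set b : ℝ := (μ₀ (S \ T)).toReal with hbdef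
  set c : ℝ := (μ₀ (T \ S)).toReal with hcdef
  set d : ℝ := (μ₀ ((S ∪ T)ᶜ)).toReal with hddef
  clear_value a b c d
  have ha0 : 0 ≤ a := hadef ▸ ENNReal.toReal_nonneg
  have hb0 : 0 ≤ b := hbdef ▸ ENNReal.toReal_nonneg
  have hc0 : 0 ≤ c := hcdef ▸ ENNReal.toReal_nonneg
  have hd0 : 0 ≤ d := hddef ▸ ENNReal.toReal_nonneg
  have hadd : ∀ u v w : Set X₀, μ₀ u + μ₀ v = μ₀ w →
      (μ₀ w).toReal = (μ₀ u).toReal + (μ₀ v).toReal := by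
    intro u v w e
    rw [← e, ENNReal.toReal_add (measure_ne_top μ₀ _) (measure_ne_top μ₀ _)]
  -- measure identities
  have hSval : (μ₀ S).toReal = a + b := by
    rw [hadef, hbdef]; exact hadd _ _ _ (measure_inter_add_diff S hT)
  have hScval : (μ₀ Sᶜ).toReal = c + d := by
    have e1 : Sᶜ ∩ T = T \ S := by ext x; simp [Set.mem_diff, and_comm]
    have e2 : Sᶜ \ T = (S ∪ T)ᶜ := by ext x; simp [Set.mem_diff, and_comm]
    have h0 := measure_inter_add_diff Sᶜ hT (μ := μ₀)
    rw [e1, e2] at h0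
    rw [hcdef, hddef]; exact hadd _ _ _ h0
  have hTval : (μ₀ T).toReal = a + c := by
    have e1 : T ∩ S = S ∩ T := Set.inter_comm T S
    have h0 := measure_inter_add_diff T hS (μ := μ₀)
    rw [e1] at h0
    rw [hadef, hcdef]; exact hadd _ _ _ h0
  have hTcval : (μ₀ Tᶜ).toReal = b + d := by
    have e1 : Tᶜ ∩ S = S \ T := by ext x; simp [Set.mem_diff, and_comm]
    have e2 : Tᶜ \ S = (S ∪ T)ᶜ := by ext x; simp [Set.mem_diff, and_comm]
    have h0 := measure_inter_add_diff Tᶜ hS (μ := μ₀)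
    rw [e1, e2] at h0
    rw [hbdef, hddef]; exact hadd _ _ _ h0
  have htot : a + b + (c + d) = 1 := by
    have h2 := measure_add_measure_compl (μ := μ₀) hS
    have h1 : (μ₀ S).toReal + (μ₀ Sᶜ).toReal = 1 := by
      rw [← ENNReal.toReal_add (measure_ne_top μ₀ _) (measure_ne_top μ₀ _), h2]
      simp
    rw [hSval, hScval] at h1
    linarith
  have hsymm : (μ₀ (symmDiff T S)).toReal = c + b := by
    have e : symmDiff T S = (T \ S) ∪ (S \ T) := by
      rw [Set.symmDiff_def]
    have hdisj : Disjoint (T \ S) (S \ T) := disjoint_sdiff_sdiff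
    rw [e, measure_union hdisj (hS.diff hT),
      ENNReal.toReal_add (measure_ne_top μ₀ _) (measure_ne_top μ₀ _), hcdef, hbdef]
  -- abbreviations for the normalization constants
  set sh : ℝ := L * (a + b) + (c + d) with hshdef
  set sg : ℝ := L * (a + c) + (b + d) with hsgdef
  set W : ℝ := L * a + L ^ 2 * b + c / L + d with hWdef
  clear_value sh sg W
  have hρh : ρ h = sh⁻¹ := by rw [hρ h, ← hSdef, hSval, hScval, hshdef]
  have hρg : ρ (g * h) = sg⁻¹ := by rw [hρ (g * h), ← hTdef, hTval, hTcval, hsgdef]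
  have hshL : L ≤ sh := by
    rw [hshdef]
    nlinarith [mul_nonneg (by linarith : (0:ℝ) ≤ 1 - L) (by linarith : (0:ℝ) ≤ c + d)]
  have hsgL : L ≤ sg := by
    rw [hsgdef]
    nlinarith [mul_nonneg (by linarith : (0:ℝ) ≤ 1 - L) (by linarith : (0:ℝ) ≤ b + d)]
  have hsh0 : 0 < sh := lt_of_lt_of_le hL0 hshL
  have hsg0 : 0 < sg := lt_of_lt_of_le hL0 hsgL
  have hW0 : 0 < W := by
    rw [hWdef]
    have h2 : L ^ 2 * c ≤ c / L := by
      rw [le_div_iff₀ hL0]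
      nlinarith [mul_nonneg hc0 (by nlinarith : (0:ℝ) ≤ 1 - L ^ 3)]
    nlinarith [mul_nonneg ha0 (by nlinarith : (0:ℝ) ≤ L - L ^ 2),
      mul_nonneg hd0 (by nlinarith : (0:ℝ) ≤ 1 - L ^ 2),
      mul_pos hL0 hL0]
  -- compute the integral
  have hI : (∫ x, (f h x) ^ 2 / f (g * h) x ∂μ₀) = sg * W / sh ^ 2 := by
    have hfun : (fun x => (f h x) ^ 2 / f (g * h) x) =
        (fun x =>
          Set.indicator (S ∩ T) (fun _ => (ρ h * L) ^ 2 / (ρ (g * h) * L)) x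
          + Set.indicator (S \ T) (fun _ => (ρ h * L) ^ 2 / ρ (g * h)) x
          + Set.indicator (T \ S) (fun _ => (ρ h) ^ 2 / (ρ (g * h) * L)) x
          + Set.indicator ((S ∪ T)ᶜ) (fun _ => (ρ h) ^ 2 / ρ (g * h)) x) := by
      funext x
      rw [hf, hf, ← hSdef, ← hTdef]
      by_cases hx1 : x ∈ S <;> by_cases hx2 : x ∈ T <;>
        simp [Set.indicator, hx1, hx2]
    rw [hfun]
    have i1 : Integrable (fun x => Set.indicator (S ∩ T)
        (fun _ => (ρ h * L) ^ 2 / (ρ (g * h) * L)) x) μ₀ :=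
      (integrable_const _).indicator (hS.inter hT)
    have i2 : Integrable (fun x => Set.indicator (S \ T)
        (fun _ => (ρ h * L) ^ 2 / ρ (g * h)) x) μ₀ :=
      (integrable_const _).indicator (hS.diff hT)
    have i3 : Integrable (fun x => Set.indicator (T \ S)
        (fun _ => (ρ h) ^ 2 / (ρ (g * h) * L)) x) μ₀ :=
      (integrable_const _).indicator (hT.diff hS)
    have i4 : Integrable (fun x => Set.indicator ((S ∪ T)ᶜ)
        (fun _ => (ρ h) ^ 2 / ρ (g * h)) x) μ₀ :=
      (integrable_const _).indicator (hS.union hT).compl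
    have i12 : Integrable (fun x =>
        Set.indicator (S ∩ T) (fun _ => (ρ h * L) ^ 2 / (ρ (g * h) * L)) x
        + Set.indicator (S \ T) (fun _ => (ρ h * L) ^ 2 / ρ (g * h)) x) μ₀ := i1.add i2
    have i123 : Integrable (fun x =>
        Set.indicator (S ∩ T) (fun _ => (ρ h * L) ^ 2 / (ρ (g * h) * L)) x
        + Set.indicator (S \ T) (fun _ => (ρ h * L) ^ 2 / ρ (g * h)) x
        + Set.indicator (T \ S) (fun _ => (ρ h) ^ 2 / (ρ (g * h) * L)) x) μ₀ := i12.add i3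
    rw [integral_add i123 i4, integral_add i12 i3,
      integral_add i1 i2, integral_indicator_const _ (hS.inter hT),
      integral_indicator_const _ (hS.diff hT), integral_indicator_const _ (hT.diff hS),
      integral_indicator_const _ (hS.union hT).compl]
    simp only [smul_eq_mul, Measure.real, ← hadef, ← hbdef, ← hcdef, ← hddef]
    rw [hρh, hρg, hWdef]
    have hLne : L ≠ 0 := ne_of_gt hL0
    have hshne : sh ≠ 0 := ne_of_gt hsh0
    have hsgne : sg ≠ 0 := ne_of_gt hsg0
    field_simp
  rw [hI, hsymm]
  -- now the analytic estimate
  have hlog1 : Real.log (sg / sh) ≤ sg / sh - 1 :=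
    Real.log_le_sub_one_of_pos (div_pos hsg0 hsh0)
  have hlog2 : Real.log (W / sh) ≤ W / sh - 1 :=
    Real.log_le_sub_one_of_pos (div_pos hW0 hsh0)
  have hsplit : Real.log (sg * W / sh ^ 2) = Real.log (sg / sh) + Real.log (W / sh) := by
    rw [← Real.log_mul (by positivity) (by positivity)]
    congr 1
    field_simp
  have hkey : sg / sh + W / sh - 2 ≤ L⁻¹ ^ 2 * (c + b) := by
    have h1 : sg / sh + W / sh - 2 = (sg + W - 2 * sh) / sh := by
      field_simp
    have hexp : sg + W - 2 * sh = (1 - L) ^ 2 * b + (1 - L) ^ 2 * (c * L⁻¹) := by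
      rw [hsgdef, hWdef, hshdef]; field_simp; ring
    rw [h1, hexp, div_le_iff₀ hsh0]
    have hx0 : 0 < L⁻¹ := by positivity
    have hinv : L * L⁻¹ = 1 := mul_inv_cancel₀ (ne_of_gt hL0)
    have hx1 : (1:ℝ) ≤ L⁻¹ := by nlinarith
    have hq : (0:ℝ) ≤ 1 - (1 - L) ^ 2 := by nlinarith
    have s1 : (1 - L) ^ 2 * b ≤ b := by nlinarith [mul_nonneg hb0 hq]
    have s2 : (1 - L) ^ 2 * (c * L⁻¹) ≤ c * L⁻¹ := by
      nlinarith [mul_nonneg (mul_nonneg hc0 hx0.le) hq]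
    have t1 : b + c * L⁻¹ ≤ (c + b) * L⁻¹ := by
      nlinarith [mul_nonneg hb0 (sub_nonneg.mpr hx1)]
    have t2 : (c + b) * L⁻¹ ≤ L⁻¹ ^ 2 * (c + b) * sh := by
      have h0 : L⁻¹ ^ 2 * (c + b) * L ≤ L⁻¹ ^ 2 * (c + b) * sh :=
        mul_le_mul_of_nonneg_left hshL (by positivity)
      calc (c + b) * L⁻¹ = L⁻¹ ^ 2 * (c + b) * L := by
            field_simp
        _ ≤ _ := h0
    linarith
  calc Real.log (sg * W / sh ^ 2) = Real.log (sg / sh) + Real.log (W / sh) := hsplit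
    _ ≤ sg / sh + W / sh - 2 := by linarith
    _ ≤ L⁻¹ ^ 2 * (c + b) := hkey
end

section
/- Let G = ℤ * (ℤ/aℤ) for an integer a ≥ 2. For a reduced word g = a₀ n₁ a₁ ⋯ n_k a_k with a_i ∈ ℤ/aℤ and n_i ∈ ℤ nonzero, set |g| = |n₁| + ⋯ + |n_k|, with |g| = 0 when g ∈ ℤ/aℤ. Then for every m ≥ 1: |{g ∈ G : |g| ≤ m}| = (a/(a-1)) (a (2a-1)^m - 1). Consequently lim sup_{s→∞} (log |{g : |g| ≤ s}|)/s = log(2a-1). -/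
/-- The family of the two factors of the free product `ℤ * (ℤ/aℤ)`, written
multiplicatively and indexed by `Bool`: `true` corresponds to `ℤ`, `false` to `ℤ/aℤ`. -/
def freeProdFam (a : ℕ) : Bool → Type
  | true => Multiplicative ℤ
  | false => Multiplicative (ZMod a)

instance (a : ℕ) : ∀ b, Group (freeProdFam a b)
  | true => inferInstanceAs (Group (Multiplicative ℤ))
  | false => inferInstanceAs (Group (Multiplicative (ZMod a)))

instance (a : ℕ) : ∀ b, DecidableEq (freeProdFam a b)
  | true => inferInstanceAs (DecidableEq (Multiplicative ℤ))
  | false => inferInstanceAs (DecidableEq (Multiplicative (ZMod a)))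

/-- The contribution of one letter of a reduced word to the length `|g|`: the absolute
value of the letter if it lies in the factor `ℤ`, and `0` if it lies in `ℤ/aℤ`. -/
def letterVal (a : ℕ) : (Σ b, freeProdFam a b) → ℕ
  | ⟨true, m⟩ => (Multiplicative.toAdd m).natAbs
  | ⟨false, _⟩ => 0

/-- The length `|g|` of an element of `ℤ * (ℤ/aℤ)`: the sum of the absolute values of the
`ℤ`-letters of the unique reduced word representing `g`. -/
def wordLen (a : ℕ) (g : Monoid.CoprodI (freeProdFam a)) : ℕ :=
  (((Monoid.CoprodI.Word.equiv g).toList).map (letterVal a)).sum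

namespace Stmt15

variable (a : ℕ)

abbrev Letter := (Σ b, freeProdFam a b)
abbrev L := List (Letter a)

def tl (n : ℤ) : Letter a := ⟨true, Multiplicative.ofAdd n⟩
def fl (c : Multiplicative (ZMod a)) : Letter a := ⟨false, c⟩

lemma letterVal_tl (n : ℤ) : letterVal a (tl a n) = n.natAbs := rfl
@[simp] lemma letterVal_fl (c : Multiplicative (ZMod a)) : letterVal a (fl a c) = 0 := rfl
@[simp] lemma letterVal_false' (v : freeProdFam a false) :
    letterVal a (⟨false, v⟩ : Letter a) = 0 := rfl

lemma tl_ne_one_iff (n : ℤ) : (tl a n).2 ≠ 1 ↔ n ≠ 0 := by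
  show (Multiplicative.ofAdd n ≠ 1) ↔ _
  simp

lemma tl_eq_true (v : freeProdFam a true) :
    (⟨true, v⟩ : Letter a) = tl a (Multiplicative.toAdd (α := ℤ) v) := rfl

lemma fl_eq_false (v : freeProdFam a false) : (⟨false, v⟩ : Letter a) = fl a v := rfl

def lsum (l : L a) : ℕ := (l.map (letterVal a)).sum

@[simp] lemma lsum_nil : lsum a [] = 0 := rfl
@[simp] lemma lsum_cons (x : Letter a) (t : L a) :
    lsum a (x :: t) = letterVal a x + lsum a t := rfl

def Red (l : L a) : Prop := (∀ x ∈ l, x.2 ≠ 1) ∧ l.Chain' (fun x y => x.1 ≠ y.1)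

lemma red_nil : Red a [] := ⟨by simp, List.isChain_nil⟩

lemma red_cons_iff (x : Letter a) (t : L a) :
    Red a (x :: t) ↔ x.2 ≠ 1 ∧ (∀ y ∈ t.head?, x.1 ≠ y.1) ∧ Red a t := by
  unfold Red
  simp only [List.Chain', List.isChain_cons]
  constructor
  · rintro ⟨h1, h2, h3⟩
    exact ⟨h1 x (by simp), h2, fun y hy => h1 y (by simp [hy]), h3⟩
  · rintro ⟨h1, h2, h3, h4⟩
    refine ⟨?_, h2, h4⟩
    intro y hy
    rcases List.mem_cons.mp hy with rfl | hy
    · exact h1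
    · exact h3 y hy

def headIs (b : Bool) (l : L a) : Prop := ∀ x ∈ l.head?, x.1 = b

@[simp] lemma headIs_nil (b : Bool) : headIs a b [] := by simp [headIs]

lemma headIs_cons {b : Bool} {x : Letter a} {t : L a} :
    headIs a b (x :: t) ↔ x.1 = b := by simp [headIs]

def Sset (m : ℕ) : Set (L a) := {l | Red a l ∧ lsum a l ≤ m ∧ headIs a true l}
def Fset (m : ℕ) : Set (L a) := {l | Red a l ∧ lsum a l ≤ m ∧ headIs a false l}
def Wset (m : ℕ) : Set (L a) := {l | Red a l ∧ lsum a l ≤ m}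

lemma nil_mem_S (m : ℕ) : [] ∈ Sset a m := ⟨red_nil a, by simp, by simp⟩
lemma nil_mem_F (m : ℕ) : [] ∈ Fset a m := ⟨red_nil a, by simp, by simp⟩

end Stmt15

namespace Stmt15
variable (a : ℕ)

/-! ### The map `ψW : ZMod a × S m ≃ W m` -/

def ψW (m : ℕ) (p : Multiplicative (ZMod a) × ↥(Sset a m)) : ↥(Wset a m) :=
  ⟨if p.1 = 1 then p.2.val else fl a p.1 :: p.2.val, by
    obtain ⟨c, l, hR, hs, hh⟩ := p
    split_ifs with hc
    · exact ⟨hR, hs⟩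
    · refine ⟨(red_cons_iff a _ _).mpr ⟨hc, ?_, hR⟩, by simpa using hs⟩
      intro y hy
      rw [hh y hy]
      simp [fl]⟩

lemma ψW_bij (m : ℕ) : Function.Bijective (ψW a m) := by
  constructor
  · rintro ⟨c₁, l₁, m₁⟩ ⟨c₂, l₂, m₂⟩ h
    rw [Subtype.mk.injEq] at h
    simp only [ψW] at h
    split_ifs at h with h1 h2 h2
    · subst h1 h2
      exact Prod.ext rfl (Subtype.ext h)
    · exfalso
      obtain ⟨-, -, hh⟩ := m₁
      rw [h] at hh
      simpa [fl] using hh (fl a c₂) (by simp)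
    · exfalso
      obtain ⟨-, -, hh⟩ := m₂
      rw [← h] at hh
      simpa [fl] using hh (fl a c₁) (by simp)
    · simp only [fl] at h
      simp only [List.cons.injEq] at h
      obtain ⟨h1, h2⟩ := h
      simp only [Sigma.ext_iff, heq_eq_eq] at h1
      simp only [Prod.mk.injEq, Subtype.mk.injEq]
      exact ⟨eq_of_heq h1.2, h2⟩
  · rintro ⟨l, hR, hs⟩
    match l with
    | [] =>
      refine ⟨⟨1, ⟨[], nil_mem_S a m⟩⟩, ?_⟩
      simp [ψW]
    | ⟨true, v⟩ :: t =>
      refine ⟨⟨1, ⟨⟨true, v⟩ :: t, hR, hs, (headIs_cons a).mpr rfl⟩⟩, ?_⟩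
      simp [ψW]
    | ⟨false, v⟩ :: t =>
      have hv : v ≠ 1 := hR.1 ⟨false, v⟩ (by simp)
      have hRt := (red_cons_iff a _ _).mp hR
      refine ⟨⟨v, ⟨t, hRt.2.2, by simpa using hs, ?_⟩⟩, ?_⟩
      · intro y hy
        have := hRt.2.1 y hy
        simp only [ne_eq] at this
        revert this
        cases y.1 <;> simp
      · apply Subtype.ext
        exact if_neg hv

/-! ### The map `ψF : Option ((ZMod a \ {1}) × S m) ≃ F m` -/

def ψF (m : ℕ) (p : Option ({c : Multiplicative (ZMod a) // c ≠ 1} × ↥(Sset a m))) :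
    ↥(Fset a m) :=
  match p with
  | none => ⟨[], nil_mem_F a m⟩
  | some (c, l) =>
    ⟨fl a c.1 :: l.val, by
      obtain ⟨l, hR, hs, hh⟩ := l
      refine ⟨(red_cons_iff a _ _).mpr ⟨c.2, ?_, hR⟩, by simpa using hs, by simp [headIs, fl]⟩
      intro y hy
      rw [hh y hy]
      simp [fl]⟩

lemma ψF_bij (m : ℕ) : Function.Bijective (ψF a m) := by
  constructor
  · rintro (_ | ⟨c₁, l₁, m₁⟩) (_ | ⟨c₂, l₂, m₂⟩) h <;>
      simp only [ψF, Subtype.mk.injEq] at h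
    · rfl
    · simp at h
    · simp at h
    · simp only [fl] at h
      simp only [List.cons.injEq] at h
      obtain ⟨h1, h2⟩ := h
      simp only [Sigma.ext_iff, heq_eq_eq] at h1
      simp only [Option.some.injEq, Prod.mk.injEq, Subtype.mk.injEq]
      exact ⟨Subtype.ext (eq_of_heq h1.2), h2⟩
  · rintro ⟨l, hR, hs, hh⟩
    match l with
    | [] => exact ⟨none, rfl⟩
    | ⟨true, v⟩ :: t => simp [headIs] at hh
    | ⟨false, v⟩ :: t =>
      have hv : v ≠ 1 := hR.1 ⟨false, v⟩ (by simp)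
      have hRt := (red_cons_iff a _ _).mp hR
      refine ⟨some ⟨⟨v, hv⟩, ⟨t, hRt.2.2, by simpa using hs, ?_⟩⟩, rfl⟩
      intro y hy
      have := hRt.2.1 y hy
      simp only [ne_eq] at this
      revert this
      cases y.1 <;> simp

end Stmt15

namespace Stmt15
variable (a : ℕ)

def incI (n : ℤ) : ℤ := if 0 < n then n + 1 else n - 1
def decI (n : ℤ) : ℤ := if 0 < n then n - 1 else n + 1

lemma incI_ne_zero (n : ℤ) : incI n ≠ 0 := by unfold incI; split_ifs <;> omega
lemma natAbs_incI {n : ℤ} (h : n ≠ 0) : (incI n).natAbs = n.natAbs + 1 := by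
  unfold incI; split_ifs <;> omega
lemma incI_inj {m n : ℤ} (hm : m ≠ 0) (hn : n ≠ 0) (h : incI m = incI n) : m = n := by
  unfold incI at h; split_ifs at h <;> omega
lemma incI_decI {n : ℤ} (h : 2 ≤ n.natAbs) : incI (decI n) = n := by
  unfold incI decI; split_ifs <;> omega
lemma natAbs_decI {n : ℤ} (h : 2 ≤ n.natAbs) : (decI n).natAbs + 1 = n.natAbs := by
  unfold decI; split_ifs <;> omega
lemma decI_ne_zero {n : ℤ} (h : 2 ≤ n.natAbs) : decI n ≠ 0 := by
  unfold decI; split_ifs <;> omega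
lemma incI_natAbs_ne_one {n : ℤ} (h : n ≠ 0) : (incI n).natAbs ≠ 1 := by
  unfold incI; split_ifs <;> omega

def incL : L a → L a
  | ⟨true, n⟩ :: t => tl a (incI (Multiplicative.toAdd n)) :: t
  | l => l

@[simp] lemma incL_nil : incL a [] = [] := rfl
@[simp] lemma incL_cons_true (v : freeProdFam a true) (t : L a) :
    incL a (⟨true, v⟩ :: t) = tl a (incI (Multiplicative.toAdd (α := ℤ) v)) :: t := rfl

lemma true_ne_one_iff (v : freeProdFam a true) :
    v ≠ 1 ↔ Multiplicative.toAdd (α := ℤ) v ≠ 0 := by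
  rw [← tl_ne_one_iff a (Multiplicative.toAdd (α := ℤ) v)]
  rfl

lemma incL_mem {m : ℕ} {l : L a} (h : l ∈ Sset a m) : incL a l ∈ Sset a (m + 1) := by
  match l with
  | [] => exact nil_mem_S a (m+1)
  | ⟨false, v⟩ :: t => exact absurd h.2.2 (by simp [headIs])
  | ⟨true, v⟩ :: t =>
    obtain ⟨hR, hs, hh⟩ := h
    have hRt := (red_cons_iff a _ _).mp hR
    have hv : Multiplicative.toAdd (α := ℤ) v ≠ 0 := (true_ne_one_iff a v).mp hRt.1
    rw [incL_cons_true]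
    refine ⟨(red_cons_iff a _ _).mpr ⟨(tl_ne_one_iff a _).mpr (incI_ne_zero _), ?_, hRt.2.2⟩,
      ?_, (headIs_cons a).mpr rfl⟩
    · intro y hy
      exact hRt.2.1 y hy
    · rw [lsum_cons] at hs ⊢
      rw [letterVal_tl, natAbs_incI hv]
      have : letterVal a (⟨true, v⟩ : Letter a) = (Multiplicative.toAdd (α := ℤ) v).natAbs := rfl
      omega

def ψS (m : ℕ) (p : ↥(Sset a m) ⊕ Bool × ↥(Fset a m)) : ↥(Sset a (m + 1)) :=
  match p with
  | .inl l => ⟨incL a l.val, incL_mem a l.2⟩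
  | .inr (b, f) =>
    ⟨tl a (if b then 1 else -1) :: f.val, by
      obtain ⟨hR, hs, hh⟩ := f.2
      refine ⟨(red_cons_iff a _ _).mpr ⟨(tl_ne_one_iff a _).mpr (by split_ifs <;> omega), ?_, hR⟩,
        ?_, (headIs_cons a).mpr rfl⟩
      · intro y hy
        rw [hh y hy]
        simp [tl]
      · rw [lsum_cons, letterVal_tl]
        have h1 : (if b then (1:ℤ) else -1).natAbs = 1 := by split_ifs <;> rfl
        omega⟩

lemma tl_inj {n k : ℤ} (h : tl a n = tl a k) : n = k := by
  simp only [tl, Sigma.ext_iff, heq_eq_eq, true_and] at h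
  exact congrArg (Multiplicative.toAdd (α := ℤ)) (eq_of_heq h)

lemma tl_eq_true_iff (n : ℤ) (v : freeProdFam a true) :
    tl a n = (⟨true, v⟩ : Letter a) ↔ n = Multiplicative.toAdd (α := ℤ) v := by
  simp only [tl, Sigma.ext_iff, heq_eq_eq, true_and]
  constructor
  · intro h
    exact congrArg (Multiplicative.toAdd (α := ℤ)) (eq_of_heq h)
  · intro h
    rw [h]
    rfl

lemma ψS_bij (m : ℕ) : Function.Bijective (ψS a m) := by
  constructor
  · rintro (⟨l₁, hm₁⟩ | ⟨b₁, f₁, hm₁⟩) (⟨l₂, hm₂⟩ | ⟨b₂, f₂, hm₂⟩) h <;>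
      simp only [ψS, Subtype.mk.injEq] at h
    -- inl/inl
    · suffices hl : l₁ = l₂ by cases hl; rfl
      match l₁, hm₁, l₂, hm₂, h with
      | [], _, [], _, h => rfl
      | [], _, ⟨true, v⟩ :: t, _, h => simp at h
      | ⟨true, v⟩ :: t, _, [], _, h => simp at h
      | [], hm₁, ⟨false, v⟩ :: t, hm₂, h => exact absurd hm₂.2.2 (by simp [headIs])
      | ⟨false, v⟩ :: t, hm₁, _, _, h => exact absurd hm₁.2.2 (by simp [headIs])
      | ⟨true, v⟩ :: t, hm₁, ⟨false, v'⟩ :: t', hm₂, h => exact absurd hm₂.2.2 (by simp [headIs])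
      | ⟨true, v₁⟩ :: t₁, hm₁, ⟨true, v₂⟩ :: t₂, hm₂, h =>
        rw [incL_cons_true, incL_cons_true, List.cons.injEq] at h
        obtain ⟨h1, h2⟩ := h
        have hv₁ := (true_ne_one_iff a v₁).mp (hm₁.1.1 _ List.mem_cons_self)
        have hv₂ := (true_ne_one_iff a v₂).mp (hm₂.1.1 _ List.mem_cons_self)
        have h4 := incI_inj hv₁ hv₂ (tl_inj a h1)
        have h5 : v₁ = v₂ := by
          have := congrArg (Multiplicative.ofAdd (α := ℤ)) h4
          exact this
        rw [h5, h2]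
    -- inl/inr : impossible
    · exfalso
      match l₁, hm₁, h with
      | [], _, h => simp at h
      | ⟨false, v⟩ :: t, hm₁, h => exact absurd hm₁.2.2 (by simp [headIs])
      | ⟨true, v⟩ :: t, hm₁, h =>
        rw [incL_cons_true, List.cons.injEq] at h
        have hv := (true_ne_one_iff a v).mp (hm₁.1.1 _ List.mem_cons_self)
        have h3 : incI (Multiplicative.toAdd (α := ℤ) v) = (if b₂ then 1 else -1) :=
          tl_inj a h.1
        have := incI_natAbs_ne_one hv
        rw [h3] at this
        revert this
        split_ifs <;> simp
    -- inr/inl : impossible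
    · exfalso
      match l₂, hm₂, h with
      | [], _, h => simp at h
      | ⟨false, v⟩ :: t, hm₂, h => exact absurd hm₂.2.2 (by simp [headIs])
      | ⟨true, v⟩ :: t, hm₂, h =>
        rw [incL_cons_true, List.cons.injEq] at h
        have hv := (true_ne_one_iff a v).mp (hm₂.1.1 _ List.mem_cons_self)
        have h3 : (if b₁ then (1:ℤ) else -1) = incI (Multiplicative.toAdd (α := ℤ) v) :=
          tl_inj a h.1
        have := incI_natAbs_ne_one hv
        rw [← h3] at this
        revert this
        split_ifs <;> simp
    -- inr/inr
    · rw [List.cons.injEq] at h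
      obtain ⟨h1, h2⟩ := h
      have h1' : (if b₁ then (1:ℤ) else -1) = (if b₂ then 1 else -1) := tl_inj a h1
      have hb : b₁ = b₂ := by
        cases b₁ <;> cases b₂ <;> first | rfl | (exfalso; revert h1'; decide)
      cases hb
      cases h2
      rfl
  · rintro ⟨l, hR, hs, hh⟩
    match l with
    | [] => exact ⟨.inl ⟨[], nil_mem_S a m⟩, rfl⟩
    | ⟨false, v⟩ :: t => simp [headIs] at hh
    | ⟨true, v⟩ :: t =>
      have hRt := (red_cons_iff a _ _).mp hR
      have hv : Multiplicative.toAdd (α := ℤ) v ≠ 0 := (true_ne_one_iff a v).mp hRt.1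
      have hls : letterVal a (⟨true, v⟩ : Letter a)
        = (Multiplicative.toAdd (α := ℤ) v).natAbs := rfl
      rw [lsum_cons, hls] at hs
      by_cases h2 : 2 ≤ (Multiplicative.toAdd (α := ℤ) v).natAbs
      · refine ⟨.inl ⟨tl a (decI (Multiplicative.toAdd (α := ℤ) v)) :: t, ?_, ?_,
          (headIs_cons a).mpr rfl⟩, ?_⟩
        · exact (red_cons_iff a _ _).mpr
            ⟨(tl_ne_one_iff a _).mpr (decI_ne_zero h2), hRt.2.1, hRt.2.2⟩
        · rw [lsum_cons, letterVal_tl]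
          have := natAbs_decI h2
          omega
        · apply Subtype.ext
          show incL a (tl a (decI (Multiplicative.toAdd (α := ℤ) v)) :: t) = _
          have he : incL a (tl a (decI (Multiplicative.toAdd (α := ℤ) v)) :: t)
              = tl a (incI (decI (Multiplicative.toAdd (α := ℤ) v))) :: t := rfl
          rw [he, incI_decI h2, List.cons.injEq]
          exact ⟨(tl_eq_true_iff a _ v).mpr rfl, rfl⟩
      · have h1 : (Multiplicative.toAdd (α := ℤ) v).natAbs = 1 := by omega
        refine ⟨.inr ⟨decide (0 < Multiplicative.toAdd (α := ℤ) v), ⟨t, hRt.2.2, by omega, ?_⟩⟩, ?_⟩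
        · intro y hy
          have := hRt.2.1 y hy
          simp only [ne_eq] at this
          revert this
          cases y.1 <;> simp
        · apply Subtype.ext
          show tl a (if decide (0 < Multiplicative.toAdd (α := ℤ) v) then 1 else -1) :: t = _
          rw [List.cons.injEq]
          refine ⟨(tl_eq_true_iff a _ v).mpr ?_, rfl⟩
          have hb : Multiplicative.toAdd (α := ℤ) v = 1
              ∨ Multiplicative.toAdd (α := ℤ) v = -1 := by omega
          rcases hb with hb | hb <;> rw [hb] <;> norm_num

end Stmt15

namespace Stmt15
variable (a : ℕ)

/-! ### Transfer from the group to lists -/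

def ψG (m : ℕ) (g : {g : Monoid.CoprodI (freeProdFam a) // wordLen a g ≤ m}) : ↥(Wset a m) :=
  ⟨(Monoid.CoprodI.Word.equiv g.val).toList,
    ⟨(Monoid.CoprodI.Word.equiv g.val).ne_one, (Monoid.CoprodI.Word.equiv g.val).chain_ne⟩,
    g.2⟩

lemma ψG_bij (m : ℕ) : Function.Bijective (ψG a m) := by
  constructor
  · rintro ⟨g₁, h₁⟩ ⟨g₂, h₂⟩ h
    rw [Subtype.mk.injEq] at h ⊢
    exact Monoid.CoprodI.Word.equiv.injective (Monoid.CoprodI.Word.ext h)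
  · rintro ⟨l, ⟨hne, hch⟩, hs⟩
    refine ⟨⟨Monoid.CoprodI.Word.equiv.symm ⟨l, hne, hch⟩, ?_⟩, ?_⟩
    · show lsum a (Monoid.CoprodI.Word.equiv (Monoid.CoprodI.Word.equiv.symm _)).toList ≤ m
      rw [Equiv.apply_symm_apply]
      exact hs
    · apply Subtype.ext
      show (Monoid.CoprodI.Word.equiv (Monoid.CoprodI.Word.equiv.symm _)).toList = l
      rw [Equiv.apply_symm_apply]

/-! ### Finiteness -/

lemma S_zero : Sset a 0 = {[]} := by
  ext l
  constructor
  · rintro ⟨hR, hs, hh⟩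
    match l with
    | [] => rfl
    | ⟨false, v⟩ :: t => exact absurd hh (by simp [headIs])
    | ⟨true, v⟩ :: t =>
      exfalso
      have hv : Multiplicative.toAdd (α := ℤ) v ≠ 0 :=
        (true_ne_one_iff a v).mp (hR.1 _ List.mem_cons_self)
      have hls : letterVal a (⟨true, v⟩ : Letter a)
        = (Multiplicative.toAdd (α := ℤ) v).natAbs := rfl
      rw [lsum_cons, hls] at hs
      omega
  · rintro rfl
    exact nil_mem_S a 0

lemma finite_SF (ha : 2 ≤ a) : ∀ m : ℕ, Finite ↥(Sset a m) ∧ Finite ↥(Fset a m) := by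
  haveI : NeZero a := ⟨by omega⟩
  haveI : Finite (Multiplicative (ZMod a)) :=
    Finite.of_equiv (ZMod a) (Multiplicative.ofAdd (α := ZMod a))
  have key : ∀ m : ℕ, Finite ↥(Sset a m) → Finite ↥(Fset a m) := by
    intro m hS
    haveI := hS
    haveI : Finite (Option ({c : Multiplicative (ZMod a) // c ≠ 1} × ↥(Sset a m))) :=
      Finite.of_equiv _ (Equiv.optionEquivSumPUnit.{0,0} _).symm
    exact Finite.of_surjective (ψF a m) (ψF_bij a m).2
  intro m
  induction m with
  | zero =>
    have hS : Finite ↥(Sset a 0) := by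
      rw [S_zero]
      infer_instance
    exact ⟨hS, key 0 hS⟩
  | succ n ih =>
    haveI := ih.1
    haveI := ih.2
    have hS : Finite ↥(Sset a (n + 1)) := Finite.of_surjective (ψS a n) (ψS_bij a n).2
    exact ⟨hS, key _ hS⟩


/-! ### Cardinalities -/

lemma card_S_zero : Nat.card ↥(Sset a 0) = 1 := by
  rw [S_zero]
  simp

lemma card_F (ha : 2 ≤ a) (m : ℕ) :
    Nat.card ↥(Fset a m) = 1 + (a - 1) * Nat.card ↥(Sset a m) := by
  haveI : NeZero a := ⟨by omega⟩
  haveI : Finite (Multiplicative (ZMod a)) :=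
    Finite.of_equiv (ZMod a) (Multiplicative.ofAdd (α := ZMod a))
  haveI := (finite_SF a ha m).1
  rw [← Nat.card_eq_of_bijective _ (ψF_bij a m)]
  rw [Nat.card_eq_of_bijective _ (Equiv.optionEquivSumPUnit.{0,0} _).bijective, Nat.card_sum,
    Nat.card_prod]
  have h1 : Nat.card {c : Multiplicative (ZMod a) // c ≠ 1} = a - 1 := by
    rw [Nat.card_eq_fintype_card, Fintype.card_subtype_compl, Fintype.card_subtype_eq,
      ← Nat.card_eq_fintype_card, Nat.card_congr (Multiplicative.toAdd (α := ZMod a)),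
      Nat.card_zmod]
  rw [h1]
  simp [add_comm]

lemma card_S_succ (ha : 2 ≤ a) (m : ℕ) :
    Nat.card ↥(Sset a (m + 1)) = (2 * a - 1) * Nat.card ↥(Sset a m) + 2 := by
  haveI := (finite_SF a ha m).1
  haveI := (finite_SF a ha m).2
  rw [← Nat.card_eq_of_bijective _ (ψS_bij a m), Nat.card_sum, Nat.card_prod, card_F a ha,
    Nat.card_eq_fintype_card (α := Bool), Fintype.card_bool]
  have h : 2 * a - 1 = 2 * (a - 1) + 1 := by omega
  rw [h]
  ring

lemma card_W (ha : 2 ≤ a) (m : ℕ) :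
    Nat.card ↥(Wset a m) = a * Nat.card ↥(Sset a m) := by
  have : NeZero a := ⟨by omega⟩
  rw [← Nat.card_eq_of_bijective _ (ψW_bij a m), Nat.card_prod,
    Nat.card_congr (Multiplicative.toAdd (α := ZMod a)), Nat.card_zmod]

lemma card_G (ha : 2 ≤ a) (m : ℕ) :
    Nat.card {g : Monoid.CoprodI (freeProdFam a) // wordLen a g ≤ m}
      = a * Nat.card ↥(Sset a m) := by
  rw [Nat.card_eq_of_bijective _ (ψG_bij a m), card_W a ha]

/-- The closed formula over the reals. -/
lemma card_S_real (ha : 2 ≤ a) (m : ℕ) :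
    (Nat.card ↥(Sset a m) : ℝ) * ((a : ℝ) - 1) = (a : ℝ) * (2 * (a : ℝ) - 1) ^ m - 1 := by
  induction m with
  | zero => rw [card_S_zero]; simp
  | succ n ih =>
    rw [card_S_succ a ha]
    have h2 : ((2 * a - 1 : ℕ) : ℝ) = 2 * (a : ℝ) - 1 := by
      have : (2 : ℕ) ≤ 2 * a := by omega
      push_cast [Nat.cast_sub (by omega : 1 ≤ 2 * a)]
      ring
    push_cast [h2]
    ring_nf
    ring_nf at ih
    nlinarith [ih]

end Stmt15

namespace Stmt15
variable (a : ℕ)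

lemma card_G_real (ha : 2 ≤ a) (m : ℕ) :
    (Nat.card {g : Monoid.CoprodI (freeProdFam a) // wordLen a g ≤ m} : ℝ) * ((a : ℝ) - 1)
      = (a : ℝ) * ((a : ℝ) * (2 * (a : ℝ) - 1) ^ m - 1) := by
  rw [card_G a ha m]
  push_cast
  have h := card_S_real a ha m
  nlinarith [h]

lemma haR (ha : 2 ≤ a) : (2 : ℝ) ≤ (a : ℝ) := by exact_mod_cast ha

lemma card_G_lower (ha : 2 ≤ a) (m : ℕ) :
    (2 * (a : ℝ) - 1) ^ m
      ≤ (Nat.card {g : Monoid.CoprodI (freeProdFam a) // wordLen a g ≤ m} : ℝ) := by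
  have hA := haR a ha
  have hX : (1 : ℝ) ≤ (2 * (a : ℝ) - 1) ^ m := one_le_pow₀ (by linarith)
  have key := card_G_real a ha m
  nlinarith [key, hX, hA, sq_nonneg ((a : ℝ) - 1)]

lemma card_G_upper (ha : 2 ≤ a) (m : ℕ) :
    (Nat.card {g : Monoid.CoprodI (freeProdFam a) // wordLen a g ≤ m} : ℝ)
      ≤ (2 * (a : ℝ) - 1) ^ (m + 2) := by
  have hA := haR a ha
  have hX : (1 : ℝ) ≤ (2 * (a : ℝ) - 1) ^ m := one_le_pow₀ (by linarith)
  have key := card_G_real a ha m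
  have hexp : (2 * (a : ℝ) - 1) ^ (m + 2) = (2 * (a : ℝ) - 1) ^ m * (2 * (a : ℝ) - 1) ^ 2 := by
    ring
  have hc : (0 : ℝ) ≤ (2 * (a : ℝ) - 1) ^ 2 * ((a : ℝ) - 1) - (a : ℝ) ^ 2 := by
    nlinarith [mul_nonneg (mul_nonneg (by linarith : (0:ℝ) ≤ (a : ℝ) - 2)
      (by linarith : (0:ℝ) ≤ (a : ℝ))) (by linarith : (0:ℝ) ≤ 4 * (a : ℝ) - 1), hA]
  rw [hexp, ← mul_le_mul_iff_of_pos_right (show (0:ℝ) < (a : ℝ) - 1 by linarith), key]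
  nlinarith [mul_nonneg (le_trans zero_le_one hX) hc, hA, hX]

end Stmt15

theorem stmt_15 (a : ℕ) (ha : 2 ≤ a) :
    (∀ m : ℕ, 1 ≤ m →
      (Nat.card {g : Monoid.CoprodI (freeProdFam a) // wordLen a g ≤ m} : ℝ) =
        ((a : ℝ) / ((a : ℝ) - 1)) * ((a : ℝ) * (2 * (a : ℝ) - 1) ^ m - 1)) ∧
    Filter.limsup (fun s : ℝ =>
        Real.log (Nat.card {g : Monoid.CoprodI (freeProdFam a) // (wordLen a g : ℝ) ≤ s}) / s)
      Filter.atTop = Real.log (2 * (a : ℝ) - 1) := by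
  have hA : (2 : ℝ) ≤ (a : ℝ) := by exact_mod_cast ha
  have hne : (a : ℝ) - 1 ≠ 0 := by linarith
  constructor
  · intro m _
    have h := Stmt15.card_G_real a ha m
    rw [div_mul_eq_mul_div, eq_div_iff hne]
    linarith [h]
  · set L : ℝ := Real.log (2 * (a : ℝ) - 1) with hL
    have hLpos : 0 < L := Real.log_pos (by linarith)
    have hcard : ∀ s : ℝ, 0 ≤ s →
        Nat.card {g : Monoid.CoprodI (freeProdFam a) // (wordLen a g : ℝ) ≤ s}
          = Nat.card {g : Monoid.CoprodI (freeProdFam a) // wordLen a g ≤ ⌊s⌋₊} := by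
      intro s hs
      exact Nat.card_congr (Equiv.subtypeEquivRight (fun g => (Nat.le_floor_iff hs).symm))
    have hmain : Filter.Tendsto (fun s : ℝ =>
        Real.log (Nat.card {g : Monoid.CoprodI (freeProdFam a) // (wordLen a g : ℝ) ≤ s}) / s)
        Filter.atTop (nhds L) := by
      apply tendsto_of_tendsto_of_tendsto_of_le_of_le'
        (g := fun s : ℝ => (1 - s⁻¹) * L) (h := fun s : ℝ => (1 + 2 * s⁻¹) * L)
      · have h1 : Filter.Tendsto (fun s : ℝ => 1 - s⁻¹) Filter.atTop (nhds 1) := by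
          simpa using tendsto_const_nhds.sub (tendsto_inv_atTop_zero (𝕜 := ℝ))
        simpa using h1.mul_const L
      · have h1 : Filter.Tendsto (fun s : ℝ => 1 + 2 * s⁻¹) Filter.atTop (nhds 1) := by
          simpa using tendsto_const_nhds.add ((tendsto_inv_atTop_zero (𝕜 := ℝ)).const_mul 2)
        simpa using h1.mul_const L
      · filter_upwards [Filter.eventually_ge_atTop (1 : ℝ)] with s hs1
        have hs0 : (0 : ℝ) < s := by linarith
        rw [hcard s (by linarith)]
        have hfl : ((⌊s⌋₊ : ℕ) : ℝ) ≤ s := Nat.floor_le (by linarith)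
        have hfl2 : s < ((⌊s⌋₊ : ℕ) : ℝ) + 1 := Nat.lt_floor_add_one s
        have hlow := Stmt15.card_G_lower a ha ⌊s⌋₊
        have hXpos : (0 : ℝ) < (2 * (a : ℝ) - 1) ^ ⌊s⌋₊ :=
          pow_pos (by linarith) _
        have hNpos : (0 : ℝ) < (Nat.card
            {g : Monoid.CoprodI (freeProdFam a) // wordLen a g ≤ ⌊s⌋₊} : ℝ) := by linarith
        have hlog : ((⌊s⌋₊ : ℕ) : ℝ) * L ≤ Real.log (Nat.card
            {g : Monoid.CoprodI (freeProdFam a) // wordLen a g ≤ ⌊s⌋₊} : ℝ) := by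
          have h2 := Real.log_le_log hXpos hlow
          rwa [Real.log_pow] at h2
        have key : (s - 1) * L ≤ Real.log (Nat.card
            {g : Monoid.CoprodI (freeProdFam a) // wordLen a g ≤ ⌊s⌋₊} : ℝ) := by
          refine le_trans ?_ hlog
          have : s - 1 ≤ ((⌊s⌋₊ : ℕ) : ℝ) := by linarith
          exact mul_le_mul_of_nonneg_right this hLpos.le
        have heq : (1 - s⁻¹) * L = (s - 1) * L / s := by
          field_simp
        rw [heq]
        exact (div_le_div_iff_of_pos_right hs0).mpr key
      · filter_upwards [Filter.eventually_ge_atTop (1 : ℝ)] with s hs1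
        have hs0 : (0 : ℝ) < s := by linarith
        rw [hcard s (by linarith)]
        have hfl : ((⌊s⌋₊ : ℕ) : ℝ) ≤ s := Nat.floor_le (by linarith)
        have hup := Stmt15.card_G_upper a ha ⌊s⌋₊
        have hlow := Stmt15.card_G_lower a ha ⌊s⌋₊
        have hXpos : (0 : ℝ) < (2 * (a : ℝ) - 1) ^ ⌊s⌋₊ :=
          pow_pos (by linarith) _
        have hNpos : (0 : ℝ) < (Nat.card
            {g : Monoid.CoprodI (freeProdFam a) // wordLen a g ≤ ⌊s⌋₊} : ℝ) := by linarith
        have hlog : Real.log (Nat.card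
            {g : Monoid.CoprodI (freeProdFam a) // wordLen a g ≤ ⌊s⌋₊} : ℝ)
            ≤ ((⌊s⌋₊ + 2 : ℕ) : ℝ) * L := by
          have h2 := Real.log_le_log hNpos hup
          rwa [Real.log_pow] at h2
        have key : Real.log (Nat.card
            {g : Monoid.CoprodI (freeProdFam a) // wordLen a g ≤ ⌊s⌋₊} : ℝ)
            ≤ (s + 2) * L := by
          refine le_trans hlog ?_
          have : ((⌊s⌋₊ + 2 : ℕ) : ℝ) ≤ s + 2 := by push_cast; linarith
          exact mul_le_mul_of_nonneg_right this hLpos.le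
        have heq : (1 + 2 * s⁻¹) * L = (s + 2) * L / s := by
          field_simp
        rw [heq]
        exact (div_le_div_iff_of_pos_right hs0).mpr key
    exact hmain.limsup_eq
end

section
/- Define b₁ = 1 and inductively b_n ≥ exp(n³ ∑_{k=1}^{n-1} b_k) for n ≥ 2; set a₀ = 0 and a_n = ∑_{k=1}^{n} b_k. Define F : ℤ → [0,∞) by F(n) = k + j/b_k whenever |n| = a_{k-1} + j with k ∈ ℕ and 0 ≤ j ≤ b_k. Then the cocycle c_N(n) = F(n - N) - F(n) belongs to ℓ²(ℤ) for every N ∈ ℤ, and lim sup_{s→∞} (log |{N ∈ ℤ : ‖c_N‖₂² ≤ s}|)/s = +∞. -/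
open Filter

namespace Stmt16

section
variable {b a : ℕ → ℕ}

-- basic facts on b
lemma b_pos (hb1 : b 1 = 1)
    (hbrec : ∀ n : ℕ, 2 ≤ n → Real.exp ((n : ℝ) ^ 3 * ∑ k ∈ Finset.Icc 1 (n - 1), (b k : ℝ)) ≤ b n) :
    ∀ k, 1 ≤ k → 1 ≤ b k := by
  intro k hk
  rcases eq_or_lt_of_le hk with h | h
  · rw [← h, hb1]
  · have h2 : 2 ≤ k := h
    have := hbrec k h2
    have h0 : (1:ℝ) ≤ Real.exp ((k : ℝ) ^ 3 * ∑ j ∈ Finset.Icc 1 (k - 1), (b j : ℝ)) := by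
      rw [Real.one_le_exp_iff]
      positivity
    have : (1:ℝ) ≤ (b k : ℝ) := le_trans h0 this
    exact_mod_cast this

lemma b_double (hb1 : b 1 = 1)
    (hbrec : ∀ n : ℕ, 2 ≤ n → Real.exp ((n : ℝ) ^ 3 * ∑ k ∈ Finset.Icc 1 (n - 1), (b k : ℝ)) ≤ b n) :
    ∀ k, 1 ≤ k → 2 * b k ≤ b (k + 1) := by
  intro k hk
  have hrec := hbrec (k+1) (by omega)
  have hsimp : (k + 1) - 1 = k := by omega
  rw [hsimp] at hrec
  have hbk1 : (1:ℝ) ≤ (b k : ℝ) := by exact_mod_cast b_pos hb1 hbrec k hk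
  have hsum : (b k : ℝ) ≤ ∑ j ∈ Finset.Icc 1 k, (b j : ℝ) := by
    apply Finset.single_le_sum (f := fun j => (b j : ℝ)) (fun i _ => by positivity)
    simp [Finset.mem_Icc, hk]
  have hc : (1:ℝ) ≤ ((k:ℝ)+1) ^ 3 := by
    have h0 : (0:ℝ) ≤ (k:ℝ) := Nat.cast_nonneg k
    exact one_le_pow₀ (by linarith)
  have hsum0 : (0:ℝ) ≤ ∑ j ∈ Finset.Icc 1 k, (b j : ℝ) :=
    Finset.sum_nonneg fun i _ => by positivity
  have harg : (b k : ℝ) ≤ ((k:ℝ)+1) ^ 3 * ∑ j ∈ Finset.Icc 1 k, (b j : ℝ) := by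
    nlinarith
  have hexp1 : Real.exp ((b k : ℝ)) ≤ Real.exp (((k:ℝ)+1) ^ 3 * ∑ j ∈ Finset.Icc 1 k, (b j : ℝ)) :=
    Real.exp_le_exp.mpr harg
  have hkey : (2:ℝ) * (b k : ℝ) ≤ Real.exp ((b k : ℝ)) := by
    have h1 : ((b k : ℝ) - 1) + 1 ≤ Real.exp ((b k : ℝ) - 1) := Real.add_one_le_exp _
    have h2 : Real.exp ((b k : ℝ)) = Real.exp 1 * Real.exp ((b k : ℝ) - 1) := by
      rw [← Real.exp_add]; ring_nf
    have h3 : (2:ℝ) ≤ Real.exp 1 := by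
      have := Real.exp_one_gt_d9; norm_num at this ⊢; linarith
    have h4 : (0:ℝ) < Real.exp ((b k : ℝ) - 1) := Real.exp_pos _
    calc (2:ℝ) * (b k : ℝ) ≤ Real.exp 1 * (b k : ℝ) := by nlinarith
    _ ≤ Real.exp 1 * Real.exp ((b k : ℝ) - 1) := by nlinarith [Real.exp_pos (1:ℝ)]
    _ = Real.exp ((b k : ℝ)) := h2.symm
  have : (2:ℝ) * (b k : ℝ) ≤ (b (k+1) : ℝ) := by
    calc (2:ℝ) * (b k:ℝ) ≤ Real.exp ((b k : ℝ)) := hkey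
    _ ≤ Real.exp (((k:ℝ)+1) ^ 3 * ∑ j ∈ Finset.Icc 1 k, (b j : ℝ)) := hexp1
    _ ≤ (b (k+1) : ℝ) := by convert hrec using 3; push_cast; ring
  exact_mod_cast this

lemma b_mono (hb1 : b 1 = 1)
    (hbrec : ∀ n : ℕ, 2 ≤ n → Real.exp ((n : ℝ) ^ 3 * ∑ k ∈ Finset.Icc 1 (n - 1), (b k : ℝ)) ≤ b n) :
    ∀ i j, 1 ≤ i → i ≤ j → b i ≤ b j := by
  intro i j hi hij
  induction j, hij using Nat.le_induction with
  | base => exact le_rfl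
  | succ n hn ih =>
      have h1 : 1 ≤ n := le_trans hi hn
      have := b_double hb1 hbrec n h1
      omega


lemma a_zero (ha : ∀ n, a n = ∑ k ∈ Finset.Icc 1 n, b k) : a 0 = 0 := by
  simp [ha 0]

lemma a_succ (ha : ∀ n, a n = ∑ k ∈ Finset.Icc 1 n, b k) (k : ℕ) :
    a (k + 1) = a k + b (k + 1) := by
  rw [ha, ha, Finset.sum_Icc_succ_top (by omega)]

lemma a_step (ha : ∀ n, a n = ∑ k ∈ Finset.Icc 1 n, b k) (k : ℕ) (hk : 1 ≤ k) :
    a k = a (k - 1) + b k := by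
  obtain ⟨m, rfl⟩ : ∃ m, k = m + 1 := ⟨k - 1, by omega⟩
  simpa using a_succ ha m

lemma a_ge (hb1 : b 1 = 1)
    (hbrec : ∀ n : ℕ, 2 ≤ n → Real.exp ((n : ℝ) ^ 3 * ∑ k ∈ Finset.Icc 1 (n - 1), (b k : ℝ)) ≤ b n)
    (ha : ∀ n, a n = ∑ k ∈ Finset.Icc 1 n, b k) : ∀ k, k ≤ a k := by
  intro k
  induction k with
  | zero => simp
  | succ n ih =>
      have := a_succ ha n
      have := b_pos hb1 hbrec (n+1) (by omega)
      omega

lemma a_mono (hb1 : b 1 = 1)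
    (hbrec : ∀ n : ℕ, 2 ≤ n → Real.exp ((n : ℝ) ^ 3 * ∑ k ∈ Finset.Icc 1 (n - 1), (b k : ℝ)) ≤ b n)
    (ha : ∀ n, a n = ∑ k ∈ Finset.Icc 1 n, b k) : ∀ i j, i ≤ j → a i ≤ a j := by
  intro i j hij
  induction j, hij using Nat.le_induction with
  | base => exact le_rfl
  | succ n hn ih => have := a_succ ha n; omega

/-- every m lies in a (half-open) interval -/
lemma rep' (hb1 : b 1 = 1)
    (hbrec : ∀ n : ℕ, 2 ≤ n → Real.exp ((n : ℝ) ^ 3 * ∑ k ∈ Finset.Icc 1 (n - 1), (b k : ℝ)) ≤ b n)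
    (ha : ∀ n, a n = ∑ k ∈ Finset.Icc 1 n, b k) (m : ℕ) :
    ∃ k, 1 ≤ k ∧ a (k - 1) ≤ m ∧ m < a k := by
  have hex : ∃ n, m < a n := ⟨m + 1, lt_of_lt_of_le (by omega) (a_ge hb1 hbrec ha (m+1))⟩
  classical
  set k := Nat.find hex with hkdef
  have hk : m < a k := Nat.find_spec hex
  have hk1 : 1 ≤ k := by
    rcases Nat.eq_zero_or_pos k with h | h
    · exfalso; rw [h] at hk; rw [a_zero ha] at hk; omega
    · exact h
  refine ⟨k, hk1, ?_, hk⟩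
  have := Nat.find_min hex (m := k - 1) (by omega)
  omega

/-- uniqueness/monotonicity of interval index -/
lemma rep_le (hb1 : b 1 = 1)
    (hbrec : ∀ n : ℕ, 2 ≤ n → Real.exp ((n : ℝ) ^ 3 * ∑ k ∈ Finset.Icc 1 (n - 1), (b k : ℝ)) ≤ b n)
    (ha : ∀ n, a n = ∑ k ∈ Finset.Icc 1 n, b k)
    {k k' m m' : ℕ} (h1 : a (k - 1) ≤ m) (h2 : m' < a k') (hmm : m ≤ m') : k ≤ k' := by
  by_contra h
  push_neg at h
  have : a k' ≤ a (k - 1) := a_mono hb1 hbrec ha k' (k-1) (by omega)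
  omega

lemma log_b (hbrec : ∀ n : ℕ, 2 ≤ n → Real.exp ((n : ℝ) ^ 3 * ∑ k ∈ Finset.Icc 1 (n - 1), (b k : ℝ)) ≤ b n)
    (ha : ∀ n, a n = ∑ k ∈ Finset.Icc 1 n, b k) (hbp : 1 ≤ b 1) (k : ℕ) (hk : 2 ≤ k) :
    (k:ℝ) ^ 3 * (a (k-1) : ℝ) ≤ Real.log (b k) := by
  have hpos : (0:ℝ) < (b k : ℝ) := by
    have := hbrec k hk
    have := Real.exp_pos ((k : ℝ) ^ 3 * ∑ j ∈ Finset.Icc 1 (k - 1), (b j : ℝ))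
    linarith
  rw [Real.le_log_iff_exp_le hpos]
  have : ((a (k-1) : ℕ) : ℝ) = ∑ j ∈ Finset.Icc 1 (k - 1), (b j : ℝ) := by
    rw [ha]; push_cast; ring
  rw [this]
  exact hbrec k hk


variable {F : ℤ → ℝ}

lemma Fval (ha : ∀ n, a n = ∑ k ∈ Finset.Icc 1 n, b k)
    (hF : ∀ (n : ℤ) (k j : ℕ), 1 ≤ k → j ≤ b k → n.natAbs = a (k - 1) + j →
      F n = (k : ℝ) + (j : ℝ) / (b k : ℝ))
    (m k : ℕ) (hk : 1 ≤ k) (h1 : a (k-1) ≤ m) (h2 : m ≤ a k) :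
    F (m : ℤ) = (k : ℝ) + ((m - a (k-1) : ℕ) : ℝ) / (b k : ℝ) := by
  have hstep := a_step ha k hk
  refine hF (m : ℤ) k (m - a (k-1)) hk (by omega) ?_
  simp only [Int.natAbs_natCast]
  omega

lemma D_eq (hb1 : b 1 = 1)
    (hbrec : ∀ n : ℕ, 2 ≤ n → Real.exp ((n : ℝ) ^ 3 * ∑ k ∈ Finset.Icc 1 (n - 1), (b k : ℝ)) ≤ b n)
    (ha : ∀ n, a n = ∑ k ∈ Finset.Icc 1 n, b k)
    (hF : ∀ (n : ℤ) (k j : ℕ), 1 ≤ k → j ≤ b k → n.natAbs = a (k - 1) + j →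
      F n = (k : ℝ) + (j : ℝ) / (b k : ℝ))
    (m k : ℕ) (hk : 1 ≤ k) (h1 : a (k-1) ≤ m) (h2 : m < a k) :
    F ((m+1 : ℕ) : ℤ) - F (m : ℤ) = 1 / (b k : ℝ) := by
  have hv1 := Fval ha hF m k hk h1 (by omega)
  have hv2 := Fval ha hF (m+1) k hk (by omega) (by omega)
  rw [hv1, hv2]
  have hb : (0:ℝ) < (b k : ℝ) := by exact_mod_cast b_pos hb1 hbrec k hk
  have e1 : ((m + 1 - a (k-1) : ℕ) : ℝ) = ((m - a (k-1) : ℕ) : ℝ) + 1 := by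
    have : m + 1 - a (k-1) = (m - a (k-1)) + 1 := by omega
    rw [this]; push_cast; ring
  rw [e1]
  field_simp
  ring

lemma D_exists (hb1 : b 1 = 1)
    (hbrec : ∀ n : ℕ, 2 ≤ n → Real.exp ((n : ℝ) ^ 3 * ∑ k ∈ Finset.Icc 1 (n - 1), (b k : ℝ)) ≤ b n)
    (ha : ∀ n, a n = ∑ k ∈ Finset.Icc 1 n, b k)
    (hF : ∀ (n : ℤ) (k j : ℕ), 1 ≤ k → j ≤ b k → n.natAbs = a (k - 1) + j →
      F n = (k : ℝ) + (j : ℝ) / (b k : ℝ)) (m : ℕ) :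
    ∃ k, 1 ≤ k ∧ a (k-1) ≤ m ∧ m < a k ∧ F ((m+1 : ℕ) : ℤ) - F (m : ℤ) = 1 / (b k : ℝ) := by
  obtain ⟨k, hk, h1, h2⟩ := rep' hb1 hbrec ha m
  exact ⟨k, hk, h1, h2, D_eq hb1 hbrec ha hF m k hk h1 h2⟩

lemma D_nonneg (hb1 : b 1 = 1)
    (hbrec : ∀ n : ℕ, 2 ≤ n → Real.exp ((n : ℝ) ^ 3 * ∑ k ∈ Finset.Icc 1 (n - 1), (b k : ℝ)) ≤ b n)
    (ha : ∀ n, a n = ∑ k ∈ Finset.Icc 1 n, b k)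
    (hF : ∀ (n : ℤ) (k j : ℕ), 1 ≤ k → j ≤ b k → n.natAbs = a (k - 1) + j →
      F n = (k : ℝ) + (j : ℝ) / (b k : ℝ)) (m : ℕ) :
    0 ≤ F ((m+1 : ℕ) : ℤ) - F (m : ℤ) := by
  obtain ⟨k, hk, _, _, hD⟩ := D_exists hb1 hbrec ha hF m
  rw [hD]; positivity

lemma D_antitone (hb1 : b 1 = 1)
    (hbrec : ∀ n : ℕ, 2 ≤ n → Real.exp ((n : ℝ) ^ 3 * ∑ k ∈ Finset.Icc 1 (n - 1), (b k : ℝ)) ≤ b n)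
    (ha : ∀ n, a n = ∑ k ∈ Finset.Icc 1 n, b k)
    (hF : ∀ (n : ℤ) (k j : ℕ), 1 ≤ k → j ≤ b k → n.natAbs = a (k - 1) + j →
      F n = (k : ℝ) + (j : ℝ) / (b k : ℝ)) {m m' : ℕ} (h : m ≤ m') :
    F ((m'+1 : ℕ) : ℤ) - F (m' : ℤ) ≤ F ((m+1 : ℕ) : ℤ) - F (m : ℤ) := by
  obtain ⟨k, hk, h1, h2, hD⟩ := D_exists hb1 hbrec ha hF m
  obtain ⟨k', hk', h1', h2', hD'⟩ := D_exists hb1 hbrec ha hF m'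
  rw [hD, hD']
  have hkk : k ≤ k' := rep_le hb1 hbrec ha h1 h2' h
  have hbb : b k ≤ b k' := b_mono hb1 hbrec k k' hk hkk
  have hbpos : (0:ℝ) < (b k : ℝ) := by exact_mod_cast b_pos hb1 hbrec k hk
  apply one_div_le_one_div_of_le hbpos
  exact_mod_cast hbb

lemma D_tail (hb1 : b 1 = 1)
    (hbrec : ∀ n : ℕ, 2 ≤ n → Real.exp ((n : ℝ) ^ 3 * ∑ k ∈ Finset.Icc 1 (n - 1), (b k : ℝ)) ≤ b n)
    (ha : ∀ n, a n = ∑ k ∈ Finset.Icc 1 n, b k)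
    (hF : ∀ (n : ℤ) (k j : ℕ), 1 ≤ k → j ≤ b k → n.natAbs = a (k - 1) + j →
      F n = (k : ℝ) + (j : ℝ) / (b k : ℝ)) {K m : ℕ} (h : a K ≤ m) :
    F ((m+1 : ℕ) : ℤ) - F (m : ℤ) ≤ 1 / (b (K+1) : ℝ) := by
  obtain ⟨k, hk, h1, h2, hD⟩ := D_exists hb1 hbrec ha hF m
  rw [hD]
  have hkk : K + 1 ≤ k := by
    refine rep_le hb1 hbrec ha (k := K+1) (m := m) (m' := m) ?_ h2 le_rfl
    simpa using h
  have hbb : b (K+1) ≤ b k := b_mono hb1 hbrec (K+1) k (by omega) hkk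
  have hbpos : (0:ℝ) < (b (K+1) : ℝ) := by
    exact_mod_cast b_pos hb1 hbrec (K+1) (by omega)
  apply one_div_le_one_div_of_le hbpos
  exact_mod_cast hbb

lemma F_mono (hb1 : b 1 = 1)
    (hbrec : ∀ n : ℕ, 2 ≤ n → Real.exp ((n : ℝ) ^ 3 * ∑ k ∈ Finset.Icc 1 (n - 1), (b k : ℝ)) ≤ b n)
    (ha : ∀ n, a n = ∑ k ∈ Finset.Icc 1 n, b k)
    (hF : ∀ (n : ℤ) (k j : ℕ), 1 ≤ k → j ≤ b k → n.natAbs = a (k - 1) + j →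
      F n = (k : ℝ) + (j : ℝ) / (b k : ℝ)) {p q : ℕ} (h : p ≤ q) :
    F (p : ℤ) ≤ F (q : ℤ) := by
  induction q, h using Nat.le_induction with
  | base => exact le_rfl
  | succ n hn ih =>
      have := D_nonneg hb1 hbrec ha hF n
      push_cast at this ⊢
      linarith

lemma F_lip (hb1 : b 1 = 1)
    (hbrec : ∀ n : ℕ, 2 ≤ n → Real.exp ((n : ℝ) ^ 3 * ∑ k ∈ Finset.Icc 1 (n - 1), (b k : ℝ)) ≤ b n)
    (ha : ∀ n, a n = ∑ k ∈ Finset.Icc 1 n, b k)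
    (hF : ∀ (n : ℤ) (k j : ℕ), 1 ≤ k → j ≤ b k → n.natAbs = a (k - 1) + j →
      F n = (k : ℝ) + (j : ℝ) / (b k : ℝ)) {p q : ℕ} (h : p ≤ q) :
    F (q : ℤ) - F (p : ℤ) ≤ ((q - p : ℕ) : ℝ) * (F ((p+1 : ℕ) : ℤ) - F (p : ℤ)) := by
  induction q, h using Nat.le_induction with
  | base => simp
  | succ n hn ih =>
      have hD : F ((n+1 : ℕ) : ℤ) - F (n : ℤ) ≤ F ((p+1 : ℕ) : ℤ) - F (p : ℤ) :=
        D_antitone hb1 hbrec ha hF hn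
      have hcast : ((n + 1 - p : ℕ) : ℝ) = ((n - p : ℕ) : ℝ) + 1 := by
        have : n + 1 - p = (n - p) + 1 := by omega
        rw [this]; push_cast; ring
      rw [hcast]
      have hD0 : 0 ≤ F ((p+1 : ℕ) : ℤ) - F (p : ℤ) := D_nonneg hb1 hbrec ha hF p
      nlinarith [ih]

lemma F_a (ha : ∀ n, a n = ∑ k ∈ Finset.Icc 1 n, b k)
    (hF : ∀ (n : ℤ) (k j : ℕ), 1 ≤ k → j ≤ b k → n.natAbs = a (k - 1) + j →
      F n = (k : ℝ) + (j : ℝ) / (b k : ℝ)) (k : ℕ) :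
    F ((a k : ℕ) : ℤ) = (k : ℝ) + 1 := by
  have := hF ((a k : ℕ) : ℤ) (k+1) 0 (by omega) (by omega) (by simp)
  rw [this]; push_cast; simp

lemma F_natAbs (hb1 : b 1 = 1)
    (hbrec : ∀ n : ℕ, 2 ≤ n → Real.exp ((n : ℝ) ^ 3 * ∑ k ∈ Finset.Icc 1 (n - 1), (b k : ℝ)) ≤ b n)
    (ha : ∀ n, a n = ∑ k ∈ Finset.Icc 1 n, b k)
    (hF : ∀ (n : ℤ) (k j : ℕ), 1 ≤ k → j ≤ b k → n.natAbs = a (k - 1) + j →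
      F n = (k : ℝ) + (j : ℝ) / (b k : ℝ)) (n : ℤ) :
    F n = F ((n.natAbs : ℕ) : ℤ) := by
  obtain ⟨k, hk, h1, h2⟩ := rep' hb1 hbrec ha n.natAbs
  have hstep := a_step ha k hk
  have e1 := hF n k (n.natAbs - a (k-1)) hk (by omega) (by omega)
  have e2 := hF ((n.natAbs : ℕ) : ℤ) k (n.natAbs - a (k-1)) hk (by omega)
    (by simp only [Int.natAbs_natCast]; omega)
  rw [e1, e2]

lemma F_zero (ha : ∀ n, a n = ∑ k ∈ Finset.Icc 1 n, b k)
    (hF : ∀ (n : ℤ) (k j : ℕ), 1 ≤ k → j ≤ b k → n.natAbs = a (k - 1) + j →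
      F n = (k : ℝ) + (j : ℝ) / (b k : ℝ)) : F 0 = 1 := by
  have := F_a ha hF 0
  rw [a_zero ha] at this
  simpa using this

lemma F_le (hb1 : b 1 = 1)
    (hbrec : ∀ n : ℕ, 2 ≤ n → Real.exp ((n : ℝ) ^ 3 * ∑ k ∈ Finset.Icc 1 (n - 1), (b k : ℝ)) ≤ b n)
    (ha : ∀ n, a n = ∑ k ∈ Finset.Icc 1 n, b k)
    (hF : ∀ (n : ℤ) (k j : ℕ), 1 ≤ k → j ≤ b k → n.natAbs = a (k - 1) + j →
      F n = (k : ℝ) + (j : ℝ) / (b k : ℝ)) {m K : ℕ} (h : m ≤ a K) :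
    F (m : ℤ) ≤ (K : ℝ) + 1 := by
  have := F_mono hb1 hbrec ha hF h
  rw [F_a ha hF K] at this
  exact this

lemma F_ge1 (hb1 : b 1 = 1)
    (hbrec : ∀ n : ℕ, 2 ≤ n → Real.exp ((n : ℝ) ^ 3 * ∑ k ∈ Finset.Icc 1 (n - 1), (b k : ℝ)) ≤ b n)
    (ha : ∀ n, a n = ∑ k ∈ Finset.Icc 1 n, b k)
    (hF : ∀ (n : ℤ) (k j : ℕ), 1 ≤ k → j ≤ b k → n.natAbs = a (k - 1) + j →
      F n = (k : ℝ) + (j : ℝ) / (b k : ℝ)) (m : ℕ) : 1 ≤ F (m : ℤ) := by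
  have h0 : F ((0:ℕ) : ℤ) = 1 := by
    have := F_zero ha hF; simpa using this
  have := F_mono hb1 hbrec ha hF (Nat.zero_le m)
  rw [h0] at this
  exact this


lemma Dsq_block (hb1 : b 1 = 1)
    (hbrec : ∀ n : ℕ, 2 ≤ n → Real.exp ((n : ℝ) ^ 3 * ∑ k ∈ Finset.Icc 1 (n - 1), (b k : ℝ)) ≤ b n)
    (ha : ∀ n, a n = ∑ k ∈ Finset.Icc 1 n, b k)
    (hF : ∀ (n : ℤ) (k j : ℕ), 1 ≤ k → j ≤ b k → n.natAbs = a (k - 1) + j →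
      F n = (k : ℝ) + (j : ℝ) / (b k : ℝ)) (L : ℕ) :
    ∑ m ∈ Finset.Ico (a L) (a (L+1)), (F ((m+1 : ℕ) : ℤ) - F (m : ℤ))^2
      = 1 / (b (L+1) : ℝ) := by
  have hconst : ∀ m ∈ Finset.Ico (a L) (a (L+1)),
      (F ((m+1 : ℕ) : ℤ) - F (m : ℤ))^2 = (1 / (b (L+1) : ℝ))^2 := by
    intro m hm
    rw [Finset.mem_Ico] at hm
    rw [D_eq hb1 hbrec ha hF m (L+1) (by omega) (by simpa using hm.1) hm.2]
  rw [Finset.sum_congr rfl hconst, Finset.sum_const, Nat.card_Ico]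
  have hcard : a (L+1) - a L = b (L+1) := by have := a_succ ha L; omega
  rw [hcard, nsmul_eq_mul]
  have hbpos : (0:ℝ) < (b (L+1) : ℝ) := by
    exact_mod_cast b_pos hb1 hbrec (L+1) (by omega)
  field_simp

lemma Dsq_Ico_strong (hb1 : b 1 = 1)
    (hbrec : ∀ n : ℕ, 2 ≤ n → Real.exp ((n : ℝ) ^ 3 * ∑ k ∈ Finset.Icc 1 (n - 1), (b k : ℝ)) ≤ b n)
    (ha : ∀ n, a n = ∑ k ∈ Finset.Icc 1 n, b k)
    (hF : ∀ (n : ℤ) (k j : ℕ), 1 ≤ k → j ≤ b k → n.natAbs = a (k - 1) + j →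
      F n = (k : ℝ) + (j : ℝ) / (b k : ℝ)) (K : ℕ) :
    ∀ L, K + 1 ≤ L → ∑ m ∈ Finset.Ico (a K) (a L), (F ((m+1 : ℕ) : ℤ) - F (m : ℤ))^2
      ≤ 2 / (b (K+1) : ℝ) - 1 / (b L : ℝ) := by
  intro L hL
  induction L, hL using Nat.le_induction with
  | base =>
      rw [Dsq_block hb1 hbrec ha hF K]
      have hbpos : (0:ℝ) < (b (K+1) : ℝ) := by
        exact_mod_cast b_pos hb1 hbrec (K+1) (by omega)
      rw [div_sub_div_same]
      have : (2:ℝ) - 1 = 1 := by norm_num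
      rw [this]
  | succ L hL ih =>
      have hm1 : a K ≤ a L := a_mono hb1 hbrec ha K L (by omega)
      have hm2 : a L ≤ a (L+1) := a_mono hb1 hbrec ha L (L+1) (by omega)
      rw [← Finset.sum_Ico_consecutive _ hm1 hm2, Dsq_block hb1 hbrec ha hF L]
      have hbL : (0:ℝ) < (b L : ℝ) := by
        exact_mod_cast b_pos hb1 hbrec L (by omega)
      have hbL1 : (0:ℝ) < (b (L+1) : ℝ) := by
        exact_mod_cast b_pos hb1 hbrec (L+1) (by omega)
      have hdb : (2:ℝ) * (b L : ℝ) ≤ (b (L+1) : ℝ) := by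
        exact_mod_cast b_double hb1 hbrec L (by omega)
      have hkey : 2 / (b (L+1) : ℝ) ≤ 1 / (b L : ℝ) := by
        rw [div_le_div_iff₀ hbL1 hbL]
        linarith
      have h2 : 1 / (b (L+1) : ℝ) ≤ 1 / (b L : ℝ) - 1 / (b (L+1) : ℝ) := by
        have : 2 / (b (L+1) : ℝ) = 1 / (b (L+1) : ℝ) + 1 / (b (L+1) : ℝ) := by ring
        linarith [hkey, this]
      linarith

lemma Dsq_tail (hb1 : b 1 = 1)
    (hbrec : ∀ n : ℕ, 2 ≤ n → Real.exp ((n : ℝ) ^ 3 * ∑ k ∈ Finset.Icc 1 (n - 1), (b k : ℝ)) ≤ b n)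
    (ha : ∀ n, a n = ∑ k ∈ Finset.Icc 1 n, b k)
    (hF : ∀ (n : ℤ) (k j : ℕ), 1 ≤ k → j ≤ b k → n.natAbs = a (k - 1) + j →
      F n = (k : ℝ) + (j : ℝ) / (b k : ℝ)) (K : ℕ) (u : Finset ℕ)
    (hu : ∀ m ∈ u, a K ≤ m) :
    ∑ m ∈ u, (F ((m+1 : ℕ) : ℤ) - F (m : ℤ))^2 ≤ 2 / (b (K+1) : ℝ) := by
  classical
  set L := K + (u.sup id) + 2 with hLdef
  have hsub : u ⊆ Finset.Ico (a K) (a L) := by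
    intro m hm
    rw [Finset.mem_Ico]
    refine ⟨hu m hm, ?_⟩
    have h1 : m ≤ u.sup id := Finset.le_sup (f := id) hm
    have h2 : L ≤ a L := a_ge hb1 hbrec ha L
    omega
  have hmono : ∑ m ∈ u, (F ((m+1 : ℕ) : ℤ) - F (m : ℤ))^2
      ≤ ∑ m ∈ Finset.Ico (a K) (a L), (F ((m+1 : ℕ) : ℤ) - F (m : ℤ))^2 :=
    Finset.sum_le_sum_of_subset_of_nonneg hsub (fun i _ _ => sq_nonneg _)
  have hbL : (0:ℝ) < (b L : ℝ) := by
    exact_mod_cast b_pos hb1 hbrec L (by omega)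
  have := Dsq_Ico_strong hb1 hbrec ha hF K L (by omega)
  have h1L : (0:ℝ) < 1 / (b L : ℝ) := by positivity
  linarith


lemma core (hb1 : b 1 = 1)
    (hbrec : ∀ n : ℕ, 2 ≤ n → Real.exp ((n : ℝ) ^ 3 * ∑ k ∈ Finset.Icc 1 (n - 1), (b k : ℝ)) ≤ b n)
    (ha : ∀ n, a n = ∑ k ∈ Finset.Icc 1 n, b k)
    (hF : ∀ (n : ℤ) (k j : ℕ), 1 ≤ k → j ≤ b k → n.natAbs = a (k - 1) + j →
      F n = (k : ℝ) + (j : ℝ) / (b k : ℝ))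
    (k : ℕ) (hk : 1 ≤ k) (N : ℤ) (hN : N.natAbs ^ 2 ≤ b k) (u : Finset ℤ) :
    ∑ n ∈ u, (F (n - N) - F n)^2 ≤ 4 * (a (k-1) : ℝ) * ((k:ℝ)+1)^2 + 8 := by
  classical
  rcases eq_or_ne N 0 with rfl | hN0
  · simp only [sub_zero, sub_self]
    have : (0:ℝ) ≤ 4 * (a (k-1) : ℝ) * ((k:ℝ)+1)^2 + 8 := by positivity
    simpa using this
  set M := N.natAbs with hMdef
  have hM1 : 1 ≤ M := by
    rcases Nat.eq_zero_or_pos M with h | h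
    · exact absurd (Int.natAbs_eq_zero.mp h) hN0
    · exact h
  have hMb : M ≤ b k := by nlinarith [hN]
  set A := a (k-1) with hAdef
  have hak : a k = A + b k := a_step ha k hk
  set H : ℕ → ℝ := fun m => if m < A then ((k:ℝ)+1)^2
    else (b k : ℝ) * (F ((m+1 : ℕ) : ℤ) - F (m : ℤ))^2 with hHdef
  have hH0 : ∀ m, 0 ≤ H m := by
    intro m
    by_cases h : m < A <;> simp only [hHdef, h, if_true, if_false, reduceIte] <;> positivity
  -- the key pointwise bound
  have key : ∀ r R : ℕ, r ≤ R → R ≤ r + M → (F (R : ℤ) - F (r : ℤ))^2 ≤ H r := by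
    intro r R hrR hRr
    by_cases hcase : r < A
    · have hRa : R ≤ a k := by omega
      have hF1 : 1 ≤ F (r : ℤ) := F_ge1 hb1 hbrec ha hF r
      have hF2 : F (R : ℤ) ≤ (k:ℝ) + 1 := by
        have h' : R ≤ a k := hRa
        exact_mod_cast F_le hb1 hbrec ha hF h'
      have hmono : F (r : ℤ) ≤ F (R : ℤ) := F_mono hb1 hbrec ha hF hrR
      simp only [hHdef, hcase, if_true, reduceIte]
      have hk0 : (0:ℝ) ≤ (k:ℝ) := Nat.cast_nonneg k
      nlinarith
    · push_neg at hcase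
      have hD0 : 0 ≤ F ((r+1 : ℕ) : ℤ) - F (r : ℤ) := D_nonneg hb1 hbrec ha hF r
      have hmono : F (r : ℤ) ≤ F (R : ℤ) := F_mono hb1 hbrec ha hF hrR
      have hlip := F_lip hb1 hbrec ha hF hrR
      have hDt : F ((r+1 : ℕ) : ℤ) - F (r : ℤ) ≤ 1 / (b ((k-1)+1) : ℝ) :=
        D_tail hb1 hbrec ha hF hcase
      have hkk : (k-1)+1 = k := by omega
      rw [hkk] at hDt
      have hRrM : ((R - r : ℕ) : ℝ) ≤ (M : ℝ) := by exact_mod_cast by omega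
      have hbd : F (R : ℤ) - F (r : ℤ) ≤ (M : ℝ) * (F ((r+1 : ℕ) : ℤ) - F (r : ℤ)) := by
        refine le_trans hlip ?_
        exact mul_le_mul_of_nonneg_right hRrM hD0
      simp only [hHdef, not_lt.mpr hcase, reduceIte, if_false]
      have hM2 : (M:ℝ)^2 ≤ (b k : ℝ) := by exact_mod_cast hN
      nlinarith [sq_nonneg (F ((r+1 : ℕ) : ℤ) - F (r : ℤ))]
  set e : ℤ → ℕ := fun n => min (n.natAbs) ((n - N).natAbs) with hedef
  -- pointwise bound in terms of e
  have point : ∀ n : ℤ, (F (n - N) - F n)^2 ≤ H (e n) := by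
    intro n
    set p := (n - N).natAbs with hp
    set q := n.natAbs with hq
    have hFn : F n = F (q : ℤ) := F_natAbs hb1 hbrec ha hF n
    have hFnN : F (n - N) = F (p : ℤ) := F_natAbs hb1 hbrec ha hF (n - N)
    have hpq : p ≤ q + M := by
      have := Int.natAbs_sub_le n N
      omega
    have hqp : q ≤ p + M := by
      have h1 : n = (n - N) + N := by ring
      have h2 : n.natAbs ≤ (n - N).natAbs + N.natAbs := by
        calc n.natAbs = ((n - N) + N).natAbs := by rw [← h1]
        _ ≤ (n - N).natAbs + N.natAbs := Int.natAbs_add_le _ _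
      omega
    rw [hFn, hFnN]
    rcases le_total p q with hle | hle
    · have : e n = p := by simp only [hedef]; omega
      rw [this]
      have := key p q hle (by omega)
      calc (F (p:ℤ) - F (q:ℤ))^2 = (F (q:ℤ) - F (p:ℤ))^2 := by ring
      _ ≤ H p := this
    · have : e n = q := by simp only [hedef]; omega
      rw [this]
      exact key q p hle (by omega)
  -- fiberwise counting
  have fiber : ∑ n ∈ u, H (e n) ≤ 4 * ∑ m ∈ u.image e, H m := by
    rw [← Finset.sum_fiberwise_of_maps_to (g := e) (fun n hn => Finset.mem_image_of_mem e hn)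
      (fun n => H (e n))]
    rw [Finset.mul_sum]
    apply Finset.sum_le_sum
    intro m hm
    have hconst : ∀ n ∈ u.filter (fun n => e n = m), H (e n) = H m := by
      intro n hn
      rw [Finset.mem_filter] at hn
      rw [hn.2]
    rw [Finset.sum_congr rfl hconst, Finset.sum_const, nsmul_eq_mul]
    have hcard : (u.filter (fun n => e n = m)).card ≤ 4 := by
      have hsub : u.filter (fun n => e n = m) ⊆
          {(m : ℤ), -(m : ℤ), N + (m : ℤ), N - (m : ℤ)} := by
        intro n hn
        rw [Finset.mem_filter] at hn
        have hen : e n = m := hn.2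
        simp only [hedef] at hen
        have : n.natAbs = m ∨ (n - N).natAbs = m := by omega
        rcases this with h | h
        · rcases Int.natAbs_eq_iff.mp h with h' | h' <;> simp [h']
        · rcases Int.natAbs_eq_iff.mp h with h' | h'
          · have : n = N + (m : ℤ) := by omega
            simp [this]
          · have : n = N - (m : ℤ) := by omega
            simp [this]
      calc (u.filter (fun n => e n = m)).card
          ≤ ({(m : ℤ), -(m : ℤ), N + (m : ℤ), N - (m : ℤ)} : Finset ℤ).card :=
            Finset.card_le_card hsub
      _ ≤ 4 := by
          have h1 := Finset.card_insert_le ((m : ℤ)) ({-(m : ℤ), N + (m : ℤ), N - (m : ℤ)} : Finset ℤ)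
          have h2 := Finset.card_insert_le (-(m : ℤ)) ({N + (m : ℤ), N - (m : ℤ)} : Finset ℤ)
          have h3 := Finset.card_insert_le (N + (m : ℤ)) ({N - (m : ℤ)} : Finset ℤ)
          have h4 : ({N - (m : ℤ)} : Finset ℤ).card = 1 := Finset.card_singleton _
          omega
    calc ((u.filter (fun n => e n = m)).card : ℝ) * H m ≤ 4 * H m := by
          apply mul_le_mul_of_nonneg_right _ (hH0 m)
          exact_mod_cast hcard
    _ = 4 * H m := rfl
  -- bounding the image sum
  have image_sum : ∀ v : Finset ℕ, ∑ m ∈ v, H m ≤ (A : ℝ) * ((k:ℝ)+1)^2 + 2 := by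
    intro v
    rw [← Finset.sum_filter_add_sum_filter_not v (fun m => m < A) H]
    have hpart1 : ∑ m ∈ v.filter (fun m => m < A), H m ≤ (A : ℝ) * ((k:ℝ)+1)^2 := by
      have hval : ∀ m ∈ v.filter (fun m => m < A), H m = ((k:ℝ)+1)^2 := by
        intro m hm
        rw [Finset.mem_filter] at hm
        simp only [hHdef, hm.2, reduceIte, if_true]
      rw [Finset.sum_congr rfl hval, Finset.sum_const, nsmul_eq_mul]
      apply mul_le_mul_of_nonneg_right _ (by positivity)
      have : v.filter (fun m => m < A) ⊆ Finset.range A := by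
        intro m hm
        rw [Finset.mem_filter] at hm
        rw [Finset.mem_range]
        exact hm.2
      have := Finset.card_le_card this
      rw [Finset.card_range] at this
      exact_mod_cast this
    have hpart2 : ∑ m ∈ v.filter (fun m => ¬ m < A), H m ≤ 2 := by
      have hval : ∀ m ∈ v.filter (fun m => ¬ m < A), H m
          = (b k : ℝ) * (F ((m+1 : ℕ) : ℤ) - F (m : ℤ))^2 := by
        intro m hm
        rw [Finset.mem_filter] at hm
        simp only [hHdef, hm.2, reduceIte, if_false]
      rw [Finset.sum_congr rfl hval, ← Finset.mul_sum]
      have htail := Dsq_tail hb1 hbrec ha hF (k-1) (v.filter (fun m => ¬ m < A))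
        (by intro m hm; rw [Finset.mem_filter] at hm; omega)
      have hkk : (k-1)+1 = k := by omega
      rw [hkk] at htail
      have hbpos : (0:ℝ) < (b k : ℝ) := by exact_mod_cast b_pos hb1 hbrec k hk
      calc (b k : ℝ) * ∑ m ∈ v.filter (fun m => ¬ m < A), (F ((m+1 : ℕ) : ℤ) - F (m : ℤ))^2
          ≤ (b k : ℝ) * (2 / (b k : ℝ)) := by
            apply mul_le_mul_of_nonneg_left htail (le_of_lt hbpos)
      _ = 2 := by field_simp
    linarith
  calc ∑ n ∈ u, (F (n - N) - F n)^2 ≤ ∑ n ∈ u, H (e n) := Finset.sum_le_sum (fun n _ => point n)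
  _ ≤ 4 * ∑ m ∈ u.image e, H m := fiber
  _ ≤ 4 * ((A : ℝ) * ((k:ℝ)+1)^2 + 2) := by
      have := image_sum (u.image e)
      linarith
  _ = 4 * (A : ℝ) * ((k:ℝ)+1)^2 + 8 := by ring


lemma b_ge (hb1 : b 1 = 1)
    (hbrec : ∀ n : ℕ, 2 ≤ n → Real.exp ((n : ℝ) ^ 3 * ∑ k ∈ Finset.Icc 1 (n - 1), (b k : ℝ)) ≤ b n) :
    ∀ k, 1 ≤ k → k ≤ b k := by
  intro k hk
  induction k, hk using Nat.le_induction with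
  | base => omega
  | succ n hn ih =>
      have h1 := b_double hb1 hbrec n hn
      have h2 := b_pos hb1 hbrec n hn
      omega

lemma summable_all (hb1 : b 1 = 1)
    (hbrec : ∀ n : ℕ, 2 ≤ n → Real.exp ((n : ℝ) ^ 3 * ∑ k ∈ Finset.Icc 1 (n - 1), (b k : ℝ)) ≤ b n)
    (ha : ∀ n, a n = ∑ k ∈ Finset.Icc 1 n, b k)
    (hF : ∀ (n : ℤ) (k j : ℕ), 1 ≤ k → j ≤ b k → n.natAbs = a (k - 1) + j →
      F n = (k : ℝ) + (j : ℝ) / (b k : ℝ)) (N : ℤ) :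
    Summable (fun n : ℤ => (F (n - N) - F n)^2) := by
  set k := N.natAbs^2 + 1 with hkdef
  have hk : 1 ≤ k := by omega
  have hNk : N.natAbs^2 ≤ b k := by
    have := b_ge hb1 hbrec k hk
    omega
  exact summable_of_sum_le (fun n => sq_nonneg _)
    (fun u => core hb1 hbrec ha hF k hk N hNk u)

lemma tsum_bound (hb1 : b 1 = 1)
    (hbrec : ∀ n : ℕ, 2 ≤ n → Real.exp ((n : ℝ) ^ 3 * ∑ k ∈ Finset.Icc 1 (n - 1), (b k : ℝ)) ≤ b n)
    (ha : ∀ n, a n = ∑ k ∈ Finset.Icc 1 n, b k)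
    (hF : ∀ (n : ℤ) (k j : ℕ), 1 ≤ k → j ≤ b k → n.natAbs = a (k - 1) + j →
      F n = (k : ℝ) + (j : ℝ) / (b k : ℝ))
    (k : ℕ) (hk : 1 ≤ k) (N : ℤ) (hN : N.natAbs ^ 2 ≤ b k) :
    ∑' n : ℤ, (F (n - N) - F n)^2 ≤ 4 * (a (k-1) : ℝ) * ((k:ℝ)+1)^2 + 8 :=
  Summable.tsum_le_of_sum_le (summable_all hb1 hbrec ha hF N)
    (fun u => core hb1 hbrec ha hF k hk N hN u)

lemma set_finite (hb1 : b 1 = 1)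
    (hbrec : ∀ n : ℕ, 2 ≤ n → Real.exp ((n : ℝ) ^ 3 * ∑ k ∈ Finset.Icc 1 (n - 1), (b k : ℝ)) ≤ b n)
    (ha : ∀ n, a n = ∑ k ∈ Finset.Icc 1 n, b k)
    (hF : ∀ (n : ℤ) (k j : ℕ), 1 ≤ k → j ≤ b k → n.natAbs = a (k - 1) + j →
      F n = (k : ℝ) + (j : ℝ) / (b k : ℝ)) (s : ℝ) :
    {N : ℤ | ∑' n : ℤ, (F (n - N) - F n)^2 ≤ s}.Finite := by
  set K := Nat.ceil s + 1 with hKdef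
  apply Set.Finite.subset (Set.finite_Icc (-(a K : ℤ)) ((a K : ℤ)))
  intro N hN
  simp only [Set.mem_setOf_eq] at hN
  have hsum := summable_all hb1 hbrec ha hF (F := F) N
  have hsingle : (F (N - N) - F N)^2 ≤ ∑' n : ℤ, (F (n - N) - F n)^2 :=
    Summable.le_tsum hsum N (fun j _ => sq_nonneg _)
  rw [sub_self] at hsingle
  rw [F_zero ha hF] at hsingle
  have hbound : (1 - F N)^2 ≤ s := le_trans hsingle hN
  by_contra hmem
  have habs : a K < N.natAbs := by
    simp only [Set.mem_Icc] at hmem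
    omega
  have hFN : ((K:ℝ) + 1) ≤ F N := by
    rw [F_natAbs hb1 hbrec ha hF N]
    have h1 : F ((a K : ℕ) : ℤ) ≤ F ((N.natAbs : ℕ) : ℤ) :=
      F_mono hb1 hbrec ha hF (le_of_lt habs)
    rw [F_a ha hF K] at h1
    exact h1
  have hsK : s + 1 ≤ (K : ℝ) := by
    have h1 := Nat.le_ceil s
    have h2 : ((K : ℕ) : ℝ) = ((Nat.ceil s : ℕ) : ℝ) + 1 := by rw [hKdef]; push_cast; ring
    linarith
  have hK1 : (1:ℝ) ≤ (K:ℝ) := by exact_mod_cast by omega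
  nlinarith [sq_nonneg (F N - 1 - (K:ℝ))]


lemma count_lower (hb1 : b 1 = 1)
    (hbrec : ∀ n : ℕ, 2 ≤ n → Real.exp ((n : ℝ) ^ 3 * ∑ k ∈ Finset.Icc 1 (n - 1), (b k : ℝ)) ≤ b n)
    (ha : ∀ n, a n = ∑ k ∈ Finset.Icc 1 n, b k)
    (hF : ∀ (n : ℤ) (k j : ℕ), 1 ≤ k → j ≤ b k → n.natAbs = a (k - 1) + j →
      F n = (k : ℝ) + (j : ℝ) / (b k : ℝ)) (k : ℕ) (hk : 1 ≤ k) :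
    Nat.sqrt (b k) ≤ Nat.card {N : ℤ // ∑' n : ℤ, (F (n - N) - F n) ^ 2
      ≤ 4 * (a (k-1) : ℝ) * ((k:ℝ)+1)^2 + 8} := by
  classical
  set s : ℝ := 4 * (a (k-1) : ℝ) * ((k:ℝ)+1)^2 + 8 with hsdef
  set S : Set ℤ := {N : ℤ | ∑' n : ℤ, (F (n - N) - F n) ^ 2 ≤ s} with hSdef
  set L : ℕ := Nat.sqrt (b k) with hLdef
  have hsub : Set.Icc (1:ℤ) (L : ℤ) ⊆ S := by
    intro N hN
    simp only [Set.mem_Icc] at hN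
    simp only [hSdef, Set.mem_setOf_eq]
    apply tsum_bound hb1 hbrec ha hF k hk N
    have h1 : (N.natAbs : ℤ) = N := Int.natAbs_of_nonneg (by omega)
    have h2 : N.natAbs ≤ L := by omega
    calc N.natAbs ^ 2 ≤ L ^ 2 := Nat.pow_le_pow_left h2 2
    _ ≤ b k := Nat.sqrt_le' (b k)
  have hfin : S.Finite := set_finite hb1 hbrec ha hF s
  have hcard : Nat.card {N : ℤ // ∑' n : ℤ, (F (n - N) - F n) ^ 2 ≤ s} = S.ncard :=
    Nat.card_coe_set_eq S
  rw [hcard]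
  have h1 : (Set.Icc (1:ℤ) (L : ℤ)).ncard ≤ S.ncard := Set.ncard_le_ncard hsub hfin
  have h2 : (Set.Icc (1:ℤ) (L : ℤ)).ncard = L := by
    rw [← Finset.coe_Icc, Set.ncard_coe_finset, Int.card_Icc]
    simp
  omega

end
end Stmt16

set_option maxHeartbeats 1000000 in
set_option maxRecDepth 10000 in
open Stmt16 in
theorem stmt_16 (b : ℕ → ℕ) (a : ℕ → ℕ) (F : ℤ → ℝ)
    (hb1 : b 1 = 1)
    (hbrec : ∀ n : ℕ, 2 ≤ n → Real.exp ((n : ℝ) ^ 3 * ∑ k ∈ Finset.Icc 1 (n - 1), (b k : ℝ)) ≤ b n)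
    (ha : ∀ n, a n = ∑ k ∈ Finset.Icc 1 n, b k)
    (hFnonneg : ∀ n, 0 ≤ F n)
    (hF : ∀ (n : ℤ) (k j : ℕ), 1 ≤ k → j ≤ b k → n.natAbs = a (k - 1) + j →
      F n = (k : ℝ) + (j : ℝ) / (b k : ℝ)) :
    (∀ N : ℤ, Summable (fun n : ℤ => (F (n - N) - F n) ^ 2)) ∧
    Filter.limsup (fun s : ℝ =>
        ((Real.log (Nat.card {N : ℤ // ∑' n : ℤ, (F (n - N) - F n) ^ 2 ≤ s}) / s : ℝ) : EReal))
      Filter.atTop = ⊤ := by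
  constructor
  · exact fun N => summable_all hb1 hbrec ha hF N
  set f : ℝ → EReal := fun s =>
    ((Real.log (Nat.card {N : ℤ // ∑' n : ℤ, (F (n - N) - F n) ^ 2 ≤ s}) / s : ℝ) : EReal)
    with hfdef
  have main : ∀ M : ℝ, (M : EReal) ≤ Filter.limsup f Filter.atTop := by
    intro M
    apply le_limsup_of_frequently_le (hu_le := ⟨⊤, Filter.Eventually.of_forall (fun x => le_top)⟩)
    rw [Filter.frequently_atTop]
    intro c
    -- choose k large enough
    set k : ℕ := Nat.ceil c + 192 * (Nat.ceil |M| + 1) + 2 with hkdef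
    have hk2 : 2 ≤ k := by omega
    have hk1 : 1 ≤ k := by omega
    set A : ℕ := a (k-1) with hAdef
    have hA1 : 1 ≤ A := by
      have h1 : k - 1 ≤ a (k-1) := a_ge hb1 hbrec ha (k-1)
      omega
    set s : ℝ := 4 * (A : ℝ) * ((k:ℝ)+1)^2 + 8 with hsdef
    have hspos : (0:ℝ) < s := by positivity
    refine ⟨s, ?_, ?_⟩
    · -- s ≥ c
      have h1 : (c:ℝ) ≤ (Nat.ceil c : ℝ) := by
        rcases le_or_gt c 0 with h | h
        · exact le_trans h (by positivity)
        · exact Nat.le_ceil c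
      have h2 : ((Nat.ceil c : ℕ) : ℝ) ≤ (k : ℝ) := by exact_mod_cast by omega
      have h3 : (k : ℝ) ≤ s := by
        have hA1' : (1:ℝ) ≤ (A:ℝ) := by exact_mod_cast hA1
        have hkr : (0:ℝ) ≤ (k:ℝ) := Nat.cast_nonneg k
        nlinarith
      linarith
    · -- M ≤ f s
      set L : ℕ := Nat.sqrt (b k) with hLdef
      have hcount : L ≤ Nat.card {N : ℤ // ∑' n : ℤ, (F (n - N) - F n) ^ 2 ≤ s} := by
        have := count_lower hb1 hbrec ha hF k hk1
        exact this
      set C : ℕ := Nat.card {N : ℤ // ∑' n : ℤ, (F (n - N) - F n) ^ 2 ≤ s} with hCdef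
      -- b k is huge
      have hbk : (16:ℕ) ≤ b k := by
        have := b_ge hb1 hbrec k hk1
        omega
      have hbkpos : (0:ℝ) < (b k : ℝ) := by positivity
      have hlogbk : (k:ℝ)^3 * (A:ℝ) ≤ Real.log (b k) := by
        have := log_b hbrec ha (by omega) k hk2
        exact this
      -- L ≥ sqrt(b k)/2
      have hsq : Real.sqrt (b k) ≤ (L:ℝ) + 1 := by
        have h1 : b k < (L+1)^2 := Nat.lt_succ_sqrt' (b k)
        have h2 : (b k : ℝ) ≤ ((L:ℝ)+1)^2 := by
          have : (b k : ℝ) < (((L+1) : ℕ) : ℝ)^2 := by exact_mod_cast h1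
          push_cast at this
          linarith
        calc Real.sqrt (b k) ≤ Real.sqrt (((L:ℝ)+1)^2) := Real.sqrt_le_sqrt h2
        _ = (L:ℝ)+1 := Real.sqrt_sq (by positivity)
      have hsqrt4 : (4:ℝ) ≤ Real.sqrt (b k) := by
        have : ((16:ℕ):ℝ) ≤ (b k : ℝ) := by exact_mod_cast hbk
        calc (4:ℝ) = Real.sqrt 16 := by
              rw [show (16:ℝ) = 4^2 by norm_num, Real.sqrt_sq (by norm_num)]
        _ ≤ Real.sqrt (b k) := Real.sqrt_le_sqrt (by exact_mod_cast this)
      have hL2 : Real.sqrt (b k) / 2 ≤ (L:ℝ) := by linarith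
      have hLpos : (0:ℝ) < (L:ℝ) := by linarith
      -- log C ≥ (1/2) log b k - log 2
      have hlogL : Real.log (Real.sqrt (b k) / 2) ≤ Real.log (L:ℝ) :=
        Real.log_le_log (by positivity) hL2
      have hlogsplit : Real.log (Real.sqrt (b k) / 2)
          = (1/2) * Real.log (b k) - Real.log 2 := by
        rw [Real.log_div (by positivity) (by norm_num), Real.log_sqrt (le_of_lt hbkpos)]
        ring
      have hlogC : Real.log (L:ℝ) ≤ Real.log (C:ℝ) := by
        apply Real.log_le_log hLpos
        exact_mod_cast hcount
      have hlog2 : Real.log 2 ≤ 1 := by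
        have := Real.log_two_lt_d9
        linarith
      have hlower : (1/2) * ((k:ℝ)^3 * (A:ℝ)) - 1 ≤ Real.log (C:ℝ) := by
        have : (1/2) * Real.log (b k) - Real.log 2 ≤ Real.log (C:ℝ) := by
          rw [← hlogsplit]; exact le_trans hlogL hlogC
        nlinarith
      -- arithmetic: M ≤ log C / s
      have hAr : (1:ℝ) ≤ (A:ℝ) := by exact_mod_cast hA1
      have hkM : 192 * (|M| + 1) ≤ (k:ℝ) := by
        have h1 : |M| ≤ (Nat.ceil |M| : ℝ) := Nat.le_ceil _
        have h2 : (192 * (Nat.ceil |M| + 1) : ℕ) ≤ k := by omega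
        have h3 : ((192 * (Nat.ceil |M| + 1) : ℕ) : ℝ) ≤ (k:ℝ) := Nat.cast_le.mpr h2
        have h4 : ((192 * (Nat.ceil |M| + 1) : ℕ) : ℝ)
            = 192 * ((Nat.ceil |M| : ℕ) : ℝ) + 192 := by push_cast; ring
        rw [h4] at h3
        linarith
      have hkr2 : (2:ℝ) ≤ (k:ℝ) := by exact_mod_cast hk2
      have hnum : (1/4) * (k:ℝ)^3 * (A:ℝ) ≤ Real.log (C:ℝ) := by
        have h1 : (1:ℝ) ≤ (1/4) * (k:ℝ)^3 * (A:ℝ) := by nlinarith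
        nlinarith
      have hden : s ≤ 48 * (A:ℝ) * (k:ℝ)^2 := by
        have h8 : (8:ℝ) ≤ 8 * (A:ℝ) * ((k:ℝ)+1)^2 / 12 + 8 := by nlinarith
        nlinarith
      have hMle : M * s ≤ Real.log (C:ℝ) := by
        rcases le_or_gt M 0 with hM | hM
        · have : M * s ≤ 0 := mul_nonpos_of_nonpos_of_nonneg hM (le_of_lt hspos)
          have hC1 : (0:ℝ) ≤ Real.log (C:ℝ) := by nlinarith
          linarith
        · have hMabs : M ≤ |M| := le_abs_self M
          have h1 : M * s ≤ M * (48 * (A:ℝ) * (k:ℝ)^2) :=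
            mul_le_mul_of_nonneg_left hden (le_of_lt hM)
          have h2 : M * (48 * (A:ℝ) * (k:ℝ)^2) ≤ (1/4) * (k:ℝ)^3 * (A:ℝ) := by
            have hk192 : 192 * M ≤ (k:ℝ) := by
              have : 192 * M ≤ 192 * (|M| + 1) := by nlinarith
              linarith
            nlinarith
          linarith
      have hfinal : M ≤ Real.log (C:ℝ) / s := by
        rw [le_div_iff₀ hspos]
        exact hMle
      exact EReal.coe_le_coe_iff.mpr hfinal
  by_contra htop
  have hlt : Filter.limsup f Filter.atTop < ⊤ := lt_top_iff_ne_top.mpr htop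
  obtain ⟨r, hr1, _⟩ := EReal.lt_iff_exists_real_btwn.mp hlt
  exact absurd (main r) (not_le.mpr hr1)
end

section
/- Let (μ_n)_{n≥1} be probability measures on ℝ, p ≠ 0, and suppose there exist t_n ∈ ℝ with ∑_{n=1}^∞ ∫_ℝ d(t - t_n, pℤ)² dμ_n(t) < +∞. Let z_n = ∫_ℝ exp(2πi (t - t_n)/p) dμ_n(t). Then ∑_{n=1}^∞ (1 - |z_n|) < +∞. -/
open MeasureTheory

private lemma sin_le_infDist (p : ℝ) (hp : p ≠ 0) (y : ℝ) :
    |p| / Real.pi * |Real.sin (Real.pi * y / p)| ≤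
      Metric.infDist y (Set.range (fun k : ℤ => p * (k : ℝ))) := by
  have hπ : (0:ℝ) < Real.pi := Real.pi_pos
  rw [Metric.infDist_eq_iInf]
  have : Nonempty (Set.range (fun k : ℤ => p * (k : ℝ))) := ⟨⟨p * (0:ℤ), ⟨0, rfl⟩⟩⟩
  apply le_ciInf
  rintro ⟨_, k, rfl⟩
  have hsplit : Real.pi * y / p = Real.pi * (y - p * k) / p + k * Real.pi := by
    field_simp
    ring
  have hsin : |Real.sin (Real.pi * y / p)| = |Real.sin (Real.pi * (y - p * k) / p)| := by
    rw [hsplit, Real.sin_add_int_mul_pi, abs_mul]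
    have : |((-1 : ℝ)) ^ k| = 1 := by
      rcases Int.even_or_odd k with h | h
      · rw [h.neg_one_zpow, abs_one]
      · rw [h.neg_one_zpow, abs_neg, abs_one]
    rw [this, one_mul]
  have hle : |Real.sin (Real.pi * (y - p * k) / p)| ≤ Real.pi * |y - p * k| / |p| := by
    calc |Real.sin (Real.pi * (y - p * k) / p)| ≤ |Real.pi * (y - p * k) / p| :=
          Real.abs_sin_le_abs
      _ = Real.pi * |y - p * k| / |p| := by
          rw [abs_div, abs_mul, abs_of_pos hπ]
  have hdist : dist y ((fun k : ℤ => p * (k : ℝ)) k) = |y - p * k| := by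
    simp [Real.dist_eq]
  rw [hsin] at *
  have hp' : (0:ℝ) < |p| := abs_pos.mpr hp
  calc |p| / Real.pi * |Real.sin (Real.pi * (y - p * k) / p)|
      ≤ |p| / Real.pi * (Real.pi * |y - p * k| / |p|) := by
        apply mul_le_mul_of_nonneg_left hle (by positivity)
    _ = |y - p * k| := by field_simp
    _ = dist y ((fun k : ℤ => p * (k : ℝ)) k) := hdist.symm

private lemma key_pointwise (p : ℝ) (hp : p ≠ 0) (y : ℝ) :
    1 - Real.cos (2 * Real.pi * y / p) ≤
      2 * (Real.pi / p) ^ 2 *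
        (Metric.infDist y (Set.range (fun k : ℤ => p * (k : ℝ)))) ^ 2 := by
  have hπ : (0:ℝ) < Real.pi := Real.pi_pos
  have hp' : (0:ℝ) < |p| := abs_pos.mpr hp
  set d := Metric.infDist y (Set.range (fun k : ℤ => p * (k : ℝ))) with hd
  have hd0 : 0 ≤ d := Metric.infDist_nonneg
  have h1 := sin_le_infDist p hp y
  -- |sin (π y / p)| ≤ π / |p| * d
  have h2 : |Real.sin (Real.pi * y / p)| ≤ Real.pi / |p| * d := by
    have := mul_le_mul_of_nonneg_left h1 (le_of_lt (div_pos hπ hp'))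
    calc |Real.sin (Real.pi * y / p)|
        = Real.pi / |p| * (|p| / Real.pi * |Real.sin (Real.pi * y / p)|) := by
          field_simp
      _ ≤ Real.pi / |p| * d := this
  have hsq : Real.sin (Real.pi * y / p) ^ 2 ≤ (Real.pi / p) ^ 2 * d ^ 2 := by
    have h3 : (Real.pi / |p|) ^ 2 = (Real.pi / p) ^ 2 := by
      rw [div_pow, div_pow, sq_abs]
    calc Real.sin (Real.pi * y / p) ^ 2 = |Real.sin (Real.pi * y / p)| ^ 2 := (sq_abs _).symm
      _ ≤ (Real.pi / |p| * d) ^ 2 := by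
          apply sq_le_sq' _ h2
          nlinarith [abs_nonneg (Real.sin (Real.pi * y / p))]
      _ = (Real.pi / p) ^ 2 * d ^ 2 := by rw [mul_pow, h3]
  have hcos : Real.cos (2 * Real.pi * y / p) = 1 - 2 * Real.sin (Real.pi * y / p) ^ 2 := by
    have h4 : 2 * Real.pi * y / p = 2 * (Real.pi * y / p) := by ring
    rw [h4, Real.cos_two_mul]
    nlinarith [Real.sin_sq_add_cos_sq (Real.pi * y / p)]
  rw [hcos]
  nlinarith

theorem stmt_18 (μ : ℕ → Measure ℝ) [∀ n, IsProbabilityMeasure (μ n)]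
    (p : ℝ) (hp : p ≠ 0) (t : ℕ → ℝ)
    (hsum : Summable (fun n : ℕ =>
      ∫ x, (Metric.infDist (x - t n) (Set.range (fun k : ℤ => p * (k : ℝ)))) ^ 2 ∂μ n))
    (z : ℕ → ℂ)
    (hz : ∀ n, z n = ∫ x, Complex.exp (2 * Real.pi * Complex.I * (x - t n) / p) ∂μ n) :
    Summable (fun n : ℕ => 1 - ‖z n‖) := by
  set S := Set.range (fun k : ℤ => p * (k : ℝ)) with hS
  set C : ℝ := 2 * (Real.pi / p) ^ 2 with hC
  -- cast identity
  have hcast : ∀ (n : ℕ) (x : ℝ),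
      (2 * Real.pi * Complex.I * ((x : ℂ) - (t n : ℂ)) / p)
        = ((2 * Real.pi * (x - t n) / p : ℝ) : ℂ) * Complex.I := by
    intro n x
    push_cast
    have : (p : ℂ) ≠ 0 := by exact_mod_cast hp
    field_simp
  -- integrands
  have hcont : ∀ n : ℕ, Continuous (fun x : ℝ =>
      Complex.exp (2 * Real.pi * Complex.I * ((x : ℂ) - (t n : ℂ)) / p)) := by
    intro n
    fun_prop
  have habs1 : ∀ (n : ℕ) (x : ℝ),
      ‖Complex.exp (2 * Real.pi * Complex.I * ((x : ℂ) - (t n : ℂ)) / p)‖ = 1 := by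
    intro n x
    rw [hcast n x, Complex.norm_exp]
    simp
  have hint : ∀ n : ℕ, Integrable (fun x : ℝ =>
      Complex.exp (2 * Real.pi * Complex.I * ((x : ℂ) - (t n : ℂ)) / p)) (μ n) := by
    intro n
    refine Integrable.mono' (integrable_const 1) (hcont n).aestronglyMeasurable ?_
    filter_upwards with x
    rw [habs1 n x]
  -- |z n| ≤ 1
  have habs_le : ∀ n, ‖z n‖ ≤ 1 := by
    intro n
    rw [hz n]
    calc ‖∫ x, Complex.exp (2 * Real.pi * Complex.I * ((x : ℂ) - (t n : ℂ)) / p) ∂μ n‖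
        ≤ ∫ x, ‖Complex.exp (2 * Real.pi * Complex.I * ((x : ℂ) - (t n : ℂ)) / p)‖ ∂μ n :=
          norm_integral_le_integral_norm _
      _ = ∫ (_ : ℝ), (1:ℝ) ∂μ n := by
          congr 1; ext x; rw [habs1 n x]
      _ = 1 := by simp
  -- real part
  have hre : ∀ n, (z n).re = ∫ x, Real.cos (2 * Real.pi * (x - t n) / p) ∂μ n := by
    intro n
    have h := integral_re (hint n)
    rw [RCLike.re_to_complex] at h
    rw [hz n, ← h]
    congr 1
    ext x
    rw [show RCLike.re (Complex.exp (2 * Real.pi * Complex.I * ((x : ℂ) - (t n : ℂ)) / p))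
        = (Complex.exp (2 * Real.pi * Complex.I * ((x : ℂ) - (t n : ℂ)) / p)).re from
        RCLike.re_to_complex]
    rw [hcast n x, Complex.exp_ofReal_mul_I_re]
  -- integrability of cos integrand
  have hcos_int : ∀ n, Integrable (fun x : ℝ => Real.cos (2 * Real.pi * (x - t n) / p)) (μ n) := by
    intro n
    refine Integrable.mono' (integrable_const 1)
      ((Real.continuous_cos.comp (by continuity)).aestronglyMeasurable) ?_
    filter_upwards with x
    exact Real.abs_cos_le_one _
  -- integrability of infDist²
  have hinf_int : ∀ n, Integrable (fun x : ℝ => (Metric.infDist (x - t n) S) ^ 2) (μ n) := by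
    intro n
    refine Integrable.mono' (integrable_const ((|p| / 2) ^ 2)) ?_ ?_
    · apply Continuous.aestronglyMeasurable
      exact ((Metric.continuous_infDist_pt S).comp (by fun_prop)).pow 2
    · filter_upwards with x
      have hd0 : (0:ℝ) ≤ Metric.infDist (x - t n) S := Metric.infDist_nonneg
      have hmem : p * ((round ((x - t n) / p) : ℤ) : ℝ) ∈ S := ⟨round ((x - t n) / p), rfl⟩
      have hb : Metric.infDist (x - t n) S ≤ |p| / 2 := by
        calc Metric.infDist (x - t n) S
            ≤ dist (x - t n) (p * ((round ((x - t n) / p) : ℤ) : ℝ)) :=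
              Metric.infDist_le_dist_of_mem hmem
          _ = |p| * |(x - t n) / p - round ((x - t n) / p)| := by
              rw [Real.dist_eq, ← abs_mul]
              congr 1
              field_simp
          _ ≤ |p| * (1/2) := by
              apply mul_le_mul_of_nonneg_left (abs_sub_round _) (abs_nonneg p)
          _ = |p| / 2 := by ring
      rw [Real.norm_eq_abs, abs_of_nonneg (by positivity)]
      have : (0:ℝ) ≤ |p| / 2 := by positivity
      nlinarith
  -- main bound
  have hbound : ∀ n, 1 - ‖z n‖ ≤ C * ∫ x, (Metric.infDist (x - t n) S) ^ 2 ∂μ n := by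
    intro n
    have h1 : 1 - ‖z n‖ ≤ 1 - (z n).re := by
      have := Complex.re_le_norm (z n)
      linarith
    have h2 : 1 - (z n).re = ∫ x, (1 - Real.cos (2 * Real.pi * (x - t n) / p)) ∂μ n := by
      rw [hre n, integral_sub (integrable_const 1) (hcos_int n)]
      simp
    have h3 : ∫ x, (1 - Real.cos (2 * Real.pi * (x - t n) / p)) ∂μ n
        ≤ ∫ x, C * (Metric.infDist (x - t n) S) ^ 2 ∂μ n := by
      apply integral_mono ((integrable_const 1).sub (hcos_int n)) ((hinf_int n).const_mul C)
      intro x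
      exact key_pointwise p hp (x - t n)
    rw [integral_const_mul] at h3
    linarith
  refine Summable.of_nonneg_of_le (fun n => by linarith [habs_le n]) hbound ?_
  exact hsum.mul_left C
end
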